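/- arXiv:1806.06267 — 4 statements merged into one kernel-verified Lean document; each statement's English description precedes it below -/
import Mathlib

section
/- For every real ε > 0 there exists d₀ such that for all integers d ≥ d₀ and all integers m ≥ (1+ε) · log_{4/3} d, every system of m trees T_1, …, T_m on the same finite vertex set V, each of maximum degree at most d, has a cooperative coloring. In particular, m_T(d) ≤ (1+o(1)) log_{4/3} d for the class T of trees. -/
/-- A set of vertices is independent in the graph `G`:
no two of its vertices are adjacent. -/
def IndepIn {V : Type*} (G : SimpleGraph V) (I : Set V) : Prop :=
  ∀ ⦃u⦄, u ∈ I → ∀ ⦃v⦄, v ∈ I → ¬ G.Adj u v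

/-- `(I j)` is a cooperative coloring for the system `G` of graphs:
each `I j` is independent in `G j` and the sets `I j` cover all vertices. -/
def IsCoopColoring {V : Type*} {m : ℕ} (G : Fin m → SimpleGraph V)
    (I : Fin m → Set V) : Prop :=
  (∀ j, IndepIn (G j) (I j)) ∧ (⋃ j, I j) = Set.univ

/-- The system `G` of graphs has a cooperative coloring. -/
def HasCoopColoring {V : Type*} {m : ℕ} (G : Fin m → SimpleGraph V) : Prop :=
  ∃ I : Fin m → Set V, IsCoopColoring G I

/-- The maximum degree of a graph on a finite vertex set. -/
noncomputable def maxDeg {V : Type*} [Fintype V] (G : SimpleGraph V) : ℕ :=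
  Finset.univ.sup fun v => (G.neighborSet v).ncard

/-- Every system of `m` trees of maximum degree at most `d` on a common finite
vertex set has a cooperative coloring. -/
def TreesColorable (d m : ℕ) : Prop :=
  ∀ (V : Type) [Fintype V] (T : Fin m → SimpleGraph V),
    (∀ i, (T i).IsTree) → (∀ i, maxDeg (T i) ≤ d) → HasCoopColoring T

/-- `m_T(d)`: the least `m` such that every `m` trees of maximum degree at most
`d` on a common finite vertex set have a cooperative coloring. -/
noncomputable def mT (d : ℕ) : ℕ := sInf {m | TreesColorable d m}


set_option linter.unusedSectionVars false
set_option linter.unusedVariables false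
set_option maxHeartbeats 1000000

open Finset

variable {ι : Type} [Fintype ι] [DecidableEq ι]

def mrg (s : Finset ι) (x y : ι → Bool) : ι → Bool := fun i => if i ∈ s then x i else y i

lemma mrg_mrg (s : Finset ι) (x y : ι → Bool) :
    mrg s (mrg s x y) (mrg s y x) = x := by
  funext i; by_cases h : i ∈ s <;> simp [mrg, h]

lemma card_inter_mul (B C : Finset (ι → Bool)) (s t : Finset ι) (hst : Disjoint s t)
    (hB : ∀ x y : ι → Bool, (∀ i ∈ s, x i = y i) → (x ∈ B ↔ y ∈ B))
    (hC : ∀ x y : ι → Bool, (∀ i ∈ t, x i = y i) → (x ∈ C ↔ y ∈ C)) :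
    (B ∩ C).card * Fintype.card (ι → Bool) = B.card * C.card := by
  have key : ((B ∩ C) ×ˢ (univ : Finset (ι → Bool))).card = (B ×ˢ C).card := by
    apply Finset.card_nbij' (fun q => (mrg s q.1 q.2, mrg s q.2 q.1))
      (fun q => (mrg s q.1 q.2, mrg s q.2 q.1))
    · rintro ⟨x, y⟩ hq
      simp only [mem_coe, mem_product, mem_inter, mem_univ, and_true] at hq
      simp only [mem_coe, mem_product]
      constructor
      · exact (hB _ x (fun i hi => by simp [mrg, hi])).mpr hq.1
      · refine (hC _ x (fun i hi => ?_)).mpr hq.2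
        have : i ∉ s := fun hs => (Finset.disjoint_left.mp hst hs) hi
        simp [mrg, this]
    · rintro ⟨x, y⟩ hq
      simp only [mem_coe, mem_product] at hq
      simp only [mem_coe, mem_product, mem_inter, mem_univ, and_true]
      refine ⟨(hB _ x (fun i hi => by simp [mrg, hi])).mpr hq.1, ?_⟩
      refine (hC _ y (fun i hi => ?_)).mpr hq.2
      have : i ∉ s := fun hs => (Finset.disjoint_left.mp hst hs) hi
      simp [mrg, this]
    · rintro ⟨x, y⟩ _; simp [mrg_mrg]
    · rintro ⟨x, y⟩ _; simp [mrg_mrg]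
  simpa [Finset.card_product, Fintype.card_fun] using key

lemma card_coord_eq (i : ι) (b : Bool) :
    (univ.filter (fun x : ι → Bool => x i = b)).card * 2 = Fintype.card (ι → Bool) := by
  have hbij : (univ.filter (fun x : ι → Bool => x i = b)).card
      = (univ.filter (fun x : ι → Bool => ¬ (x i = b))).card := by
    apply Finset.card_nbij' (fun x => Function.update x i (!x i))
      (fun x => Function.update x i (!x i))
    · intro x hx
      simp only [mem_filter, mem_univ, true_and, mem_coe] at hx ⊢
      simp [Function.update_self, hx]
    · intro x hx
      simp only [mem_filter, mem_univ, true_and, mem_coe] at hx ⊢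
      simp only [Function.update_self]
      cases hb : x i <;> cases b <;> simp_all
    · intro x _
      funext j
      by_cases h : j = i
      · subst h; simp
      · simp [Function.update_of_ne h]
    · intro x _
      funext j
      by_cases h : j = i
      · subst h; simp
      · simp [Function.update_of_ne h]
  have hsplit := Finset.card_filter_add_card_filter_not
    (s := (univ : Finset (ι → Bool))) (fun x : ι → Bool => x i = b)
  simp only [Finset.card_univ] at hsplit
  rw [← hsplit, ← hbij, mul_two]

lemma card_coord_pair (i i' : ι) (hne : i ≠ i') (a b : Bool) :
    (univ.filter (fun x : ι → Bool => x i = a ∧ x i' = b)).card * 4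
      = Fintype.card (ι → Bool) := by
  have hbij : (univ.filter (fun x : ι → Bool => x i = a ∧ x i' = b)).card
      = (univ.filter (fun x : ι → Bool => x i = a ∧ ¬ (x i' = b))).card := by
    apply Finset.card_nbij' (fun x => Function.update x i' (!x i'))
      (fun x => Function.update x i' (!x i'))
    · intro x hx
      simp only [mem_filter, mem_univ, true_and, mem_coe] at hx ⊢
      obtain ⟨h1, h2⟩ := hx
      refine ⟨by simp [Function.update_of_ne hne, h1], ?_⟩
      simp only [Function.update_self]
      cases hb : x i' <;> cases b <;> simp_all
    · intro x hx
      simp only [mem_filter, mem_univ, true_and, mem_coe] at hx ⊢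
      obtain ⟨h1, h2⟩ := hx
      refine ⟨by simp [Function.update_of_ne hne, h1], ?_⟩
      simp only [Function.update_self]
      cases hb : x i' <;> cases b <;> simp_all
    · intro x _
      funext j
      by_cases h : j = i'
      · subst h; simp
      · simp [Function.update_of_ne h]
    · intro x _
      funext j
      by_cases h : j = i'
      · subst h; simp
      · simp [Function.update_of_ne h]
  have h2 : (univ.filter (fun x : ι → Bool => x i = a ∧ x i' = b)).card
        + (univ.filter (fun x : ι → Bool => x i = a ∧ ¬ (x i' = b))).card
      = (univ.filter (fun x : ι → Bool => x i = a)).card := by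
    have := Finset.card_filter_add_card_filter_not
      (s := (univ.filter (fun x : ι → Bool => x i = a))) (fun x : ι → Bool => x i' = b)
    rw [Finset.filter_filter, Finset.filter_filter] at this
    exact this
  have h3 := card_coord_eq i a
  rw [← h3, ← h2, ← hbij]
  ring

open Finset

section LLL
variable {Ω : Type} [Fintype Ω] [DecidableEq Ω] {F : Type} [Fintype F] [DecidableEq F]

def capC (A : F → Finset Ω) (S : Finset F) : Finset Ω :=
  univ.filter (fun ω => ∀ u ∈ S, ω ∉ A u)

lemma mem_capC {A : F → Finset Ω} {S : Finset F} {ω : Ω} :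
    ω ∈ capC A S ↔ ∀ u ∈ S, ω ∉ A u := by simp [capC]

lemma capC_anti {A : F → Finset Ω} {S S' : Finset F} (h : S ⊆ S') :
    capC A S' ⊆ capC A S := fun ω hω => mem_capC.mpr fun u hu => mem_capC.mp hω u (h hu)

lemma capC_insert {A : F → Finset Ω} {u : F} {S : Finset F} :
    capC A (insert u S) = capC A S \ A u := by
  ext ω; simp only [mem_capC, mem_sdiff, mem_insert]
  constructor
  · intro h; exact ⟨fun w hw => h w (Or.inr hw), h u (Or.inl rfl)⟩
  · rintro ⟨h1, h2⟩ w (rfl | hw); exact h2; exact h1 w hw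

lemma capC_card_insert {A : F → Finset Ω} {u : F} {S : Finset F} :
    ((capC A (insert u S)).card : ℝ)
      = ((capC A S).card : ℝ) - ((A u ∩ capC A S).card : ℝ) := by
  rw [capC_insert]
  have h := Finset.card_sdiff_add_card_inter (capC A S) (A u)
  rw [Finset.inter_comm] at h
  have := congrArg (Nat.cast (R := ℝ)) h
  push_cast at this
  linarith

lemma LLL_aux (A : F → Finset Ω) (Γ : F → Finset F) (x : ℝ) (D : ℕ)
    (hx0 : 0 < x) (hx1 : x < 1)
    (hself : ∀ v, v ∈ Γ v) (hΓ : ∀ v, (Γ v).card ≤ D + 1)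
    (hind : ∀ v (S : Finset F), (∀ u ∈ S, u ∉ Γ v) →
      ((A v ∩ capC A S).card : ℝ) * (Fintype.card Ω : ℝ)
        = ((A v).card : ℝ) * ((capC A S).card : ℝ))
    (hp : ∀ v, ((A v).card : ℝ) ≤ x * (1-x)^D * (Fintype.card Ω : ℝ))
    (hΩ : 0 < Fintype.card Ω) :
    ∀ n (S : Finset F), S.card ≤ n →
      (0:ℝ) < ((capC A S).card : ℝ) ∧
        ∀ v, ((A v ∩ capC A S).card : ℝ) ≤ x * ((capC A S).card : ℝ) := by
  have hΩ' : (0:ℝ) < (Fintype.card Ω : ℝ) := by exact_mod_cast hΩ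
  have h1x : (0:ℝ) ≤ 1 - x := by linarith
  intro n
  induction n with
  | zero =>
    intro S hS
    have : S = ∅ := Finset.card_eq_zero.mp (Nat.le_zero.mp hS)
    subst this
    have hcap : capC A (∅ : Finset F) = univ := by
      ext ω; simp [mem_capC]
    rw [hcap]
    constructor
    · simpa [Finset.card_univ] using hΩ'
    · intro v
      have : A v ∩ univ = A v := inter_univ _
      rw [this, Finset.card_univ]
      calc ((A v).card : ℝ) ≤ x * (1-x)^D * (Fintype.card Ω : ℝ) := hp v
        _ ≤ x * 1 * (Fintype.card Ω : ℝ) := by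
            gcongr
            exact pow_le_one₀ h1x (by linarith)
        _ = x * (Fintype.card Ω : ℝ) := by ring
  | succ n ih =>
    intro S hS
    by_cases hc : S.card ≤ n
    · exact ih S hc
    have hcard : S.card = n + 1 := by omega
    have claim2 : ∀ v, ((A v ∩ capC A S).card : ℝ) ≤ x * ((capC A S).card : ℝ) := by
      intro v
      by_cases hvS : v ∈ S
      · have hempty : A v ∩ capC A S = ∅ := by
          apply Finset.eq_empty_of_forall_notMem
          intro ω hω
          exact mem_capC.mp (mem_of_mem_inter_right hω) v hvS (mem_of_mem_inter_left hω)
        rw [hempty]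
        simp only [card_empty, Nat.cast_zero]
        positivity
      · set S₂ := S \ Γ v with hS₂def
        set S₁ := S ∩ Γ v with hS₁def
        have peel : ∀ k (T : Finset F), T ⊆ S₁ → T.card ≤ k →
            (1-x)^T.card * ((capC A S₂).card : ℝ) ≤ ((capC A (S₂ ∪ T)).card : ℝ) := by
          intro k
          induction k with
          | zero =>
            intro T hT hTc
            have : T = ∅ := Finset.card_eq_zero.mp (Nat.le_zero.mp hTc)
            subst this
            simp
          | succ k ihk =>
            intro T hT hTc
            rcases T.eq_empty_or_nonempty with rfl | ⟨u, hu⟩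
            · simp
            · set T' := T.erase u with hT'def
              have hT'sub : T' ⊆ S₁ := (erase_subset _ _).trans hT
              have huS₁ : u ∈ S₁ := hT hu
              have huΓ : u ∈ Γ v := (mem_inter.mp huS₁).2
              have huS : u ∈ S := (mem_inter.mp huS₁).1
              have huS₂ : u ∉ S₂ := fun h => (mem_sdiff.mp h).2 huΓ
              have hunion : S₂ ∪ T = insert u (S₂ ∪ T') := by
                ext a
                simp only [mem_union, mem_insert, hT'def, mem_erase]
                constructor
                · rintro (h | h)
                  · exact Or.inr (Or.inl h)
                  · by_cases ha : a = u
                    · exact Or.inl ha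
                    · exact Or.inr (Or.inr ⟨ha, h⟩)
                · rintro (rfl | h | h)
                  · exact Or.inr hu
                  · exact Or.inl h
                  · exact Or.inr h.2
              have hWsub : S₂ ∪ T' ⊆ S.erase u := by
                intro a ha
                rcases mem_union.mp ha with h | h
                · exact mem_erase.mpr ⟨fun he => huS₂ (he ▸ h), (mem_sdiff.mp h).1⟩
                · exact mem_erase.mpr ⟨(mem_erase.mp h).1,
                    (mem_inter.mp (hT'sub h)).1⟩
              have hWcard : (S₂ ∪ T').card ≤ n := by
                have := card_le_card hWsub
                rw [card_erase_of_mem huS] at this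
                omega
              obtain ⟨hposW, hbndW⟩ := ih (S₂ ∪ T') hWcard
              have hTcard : T.card = T'.card + 1 := by
                rw [hT'def, card_erase_of_mem hu]
                have : 1 ≤ T.card := card_pos.mpr ⟨u, hu⟩
                omega
              have hinner := ihk T' hT'sub (by omega)
              calc (1-x)^T.card * ((capC A S₂).card : ℝ)
                  = (1-x) * ((1-x)^T'.card * ((capC A S₂).card : ℝ)) := by
                    rw [hTcard]; ring
                _ ≤ (1-x) * ((capC A (S₂ ∪ T')).card : ℝ) := by gcongr
                _ = ((capC A (S₂ ∪ T')).card : ℝ)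
                    - x * ((capC A (S₂ ∪ T')).card : ℝ) := by ring
                _ ≤ ((capC A (S₂ ∪ T')).card : ℝ)
                    - ((A u ∩ capC A (S₂ ∪ T')).card : ℝ) := by
                      have := hbndW u; linarith
                _ = ((capC A (S₂ ∪ T)).card : ℝ) := by
                      rw [hunion, capC_card_insert]
        have hUnion : S₂ ∪ S₁ = S := by
          rw [hS₂def, hS₁def]; exact sdiff_union_inter S (Γ v)
        have h5 := peel S₁.card S₁ subset_rfl le_rfl
        rw [hUnion] at h5
        have hS₁D : S₁.card ≤ D := by
          have hsub : S₁ ⊆ (Γ v).erase v := by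
            intro a ha
            exact mem_erase.mpr ⟨fun he => hvS (he ▸ (mem_inter.mp ha).1),
              (mem_inter.mp ha).2⟩
          have h1 := card_le_card hsub
          rw [card_erase_of_mem (hself v)] at h1
          have h2 := hΓ v
          have h3 : 1 ≤ (Γ v).card := card_pos.mpr ⟨v, hself v⟩
          omega
        have h4 : (1-x)^D ≤ (1-x)^S₁.card :=
          pow_le_pow_of_le_one h1x (by linarith) hS₁D
        have h1 : ((A v ∩ capC A S).card : ℝ) ≤ ((A v ∩ capC A S₂).card : ℝ) := by
          have := card_le_card (Finset.inter_subset_inter (Finset.Subset.refl (A v))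
            (capC_anti (A := A) (sdiff_subset : S₂ ⊆ S)))
          exact_mod_cast this
        have h2 := hind v S₂ (fun u hu => (mem_sdiff.mp hu).2)
        have key : ((A v ∩ capC A S).card : ℝ) * (Fintype.card Ω : ℝ)
            ≤ x * ((capC A S).card : ℝ) * (Fintype.card Ω : ℝ) := by
          calc ((A v ∩ capC A S).card : ℝ) * (Fintype.card Ω : ℝ)
              ≤ ((A v ∩ capC A S₂).card : ℝ) * (Fintype.card Ω : ℝ) := by gcongr
            _ = ((A v).card : ℝ) * ((capC A S₂).card : ℝ) := h2
            _ ≤ (x * (1-x)^D * (Fintype.card Ω : ℝ)) * ((capC A S₂).card : ℝ) := by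
                  gcongr; exact hp v
            _ ≤ (x * (1-x)^S₁.card * (Fintype.card Ω : ℝ)) * ((capC A S₂).card : ℝ) := by
                  gcongr
            _ = (x * (Fintype.card Ω : ℝ)) * ((1-x)^S₁.card * ((capC A S₂).card : ℝ)) := by
                  ring
            _ ≤ (x * (Fintype.card Ω : ℝ)) * ((capC A S).card : ℝ) := by
                  gcongr
            _ = x * ((capC A S).card : ℝ) * (Fintype.card Ω : ℝ) := by ring
        exact le_of_mul_le_mul_right key hΩ'
    refine ⟨?_, claim2⟩
    have hne : S.Nonempty := card_pos.mp (by omega)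
    obtain ⟨u, hu⟩ := hne
    obtain ⟨hpos', hbnd'⟩ := ih (S.erase u) (by rw [card_erase_of_mem hu]; omega)
    have hins : S = insert u (S.erase u) := (insert_erase hu).symm
    have hcardeq : ((capC A S).card : ℝ)
        = ((capC A (S.erase u)).card : ℝ) - ((A u ∩ capC A (S.erase u)).card : ℝ) := by
      conv_lhs => rw [hins]
      exact capC_card_insert
    have := hbnd' u
    have hfin : (1-x) * ((capC A (S.erase u)).card : ℝ) ≤ ((capC A S).card : ℝ) := by
      rw [hcardeq]; linarith
    have : (0:ℝ) < (1-x) * ((capC A (S.erase u)).card : ℝ) := by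
      apply mul_pos (by linarith) hpos'
    linarith

end LLL


open Finset SimpleGraph

lemma exists_parent {V : Type} (G : SimpleGraph V) (hG : G.IsTree) :
    ∃ pa : V → V, (∀ v, pa v = v ∨ G.Adj v (pa v)) ∧
      (∀ u v, G.Adj u v → pa u = v ∨ pa v = u) := by
  classical
  obtain ⟨r⟩ := hG.isConnected.nonempty
  choose w hw huniq using fun v v' => hG.existsUnique_path v v'
  refine ⟨fun v => (w v r).getVert 1, ?_, ?_⟩
  · intro v
    by_cases hvr : v = r
    · subst hvr
      have hnil : w v v = Walk.nil := (huniq v v Walk.nil Walk.IsPath.nil).symm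
      left
      show (w v v).getVert 1 = v
      rw [hnil]
      exact Walk.getVert_of_length_le _ (by simp)
    · right
      exact Walk.adj_snd (Walk.not_nil_of_ne hvr)
  · intro u v hadj
    by_cases hus : u ∈ (w v r).support
    · -- show parent of v is u
      right
      show (w v r).getVert 1 = u
      have hvr : v ≠ r := by
        rintro rfl
        have hnil : w v v = Walk.nil := (huniq v v Walk.nil Walk.IsPath.nil).symm
        rw [hnil] at hus
        simp only [Walk.support_nil, List.mem_singleton] at hus
        exact G.ne_of_adj hadj hus
      have huv : u ≠ v := G.ne_of_adj hadj
      set Q := w v r with hQdef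
      have hQ : Q.IsPath := hw v r
      have hd : (Q.dropUntil u hus).IsPath := hQ.dropUntil hus
      have hvd : v ∉ (Q.dropUntil u hus).support := by
        intro hvmem
        have hvtail : v ∈ (Q.dropUntil u hus).support.tail := by
          rw [Walk.support_eq_cons (Q.dropUntil u hus)] at hvmem
          rcases List.mem_cons.mp hvmem with h | h
          · exact absurd h.symm huv
          · exact h
        have hnodup : Q.support.Nodup := hQ.support_nodup
        have hspec : (Q.takeUntil u hus).append (Q.dropUntil u hus) = Q :=
          Walk.take_spec Q hus
        rw [← hspec, Walk.support_append] at hnodup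
        have hdisj := List.disjoint_of_nodup_append hnodup
        exact hdisj (Walk.start_mem_support _) hvtail
      have hc : (Walk.cons hadj.symm (Q.dropUntil u hus)).IsPath :=
        (Walk.cons_isPath_iff _ _).mpr ⟨hd, hvd⟩
      have heq := (huniq v r (Walk.cons hadj.symm (Q.dropUntil u hus)) hc).symm
      rw [hQdef, heq]
      exact Walk.snd_cons _ hadj.symm
    · -- parent of u is v
      left
      show (w u r).getVert 1 = v
      have hpath : (Walk.cons hadj (w v r)).IsPath :=
        (Walk.cons_isPath_iff _ _).mpr ⟨hw v r, hus⟩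
      have heq := (huniq u r (Walk.cons hadj (w v r)) hpath).symm
      rw [heq]
      exact Walk.snd_cons _ hadj


lemma one_sub_inv_pow (K : ℕ) (hK : 1 ≤ K) :
    (1/3 : ℝ) ≤ (1 - 1/(K:ℝ))^(K-1) := by
  rcases eq_or_lt_of_le hK with h1 | h2
  · rw [← h1]; norm_num
  · have hn1 : 1 ≤ K - 1 := by omega
    set n := K - 1 with hndef
    have hKn : (K:ℝ) = (n:ℝ) + 1 := by
      have : K = n + 1 := by omega
      rw [this]; push_cast; ring
    have hnpos : (0:ℝ) < (n:ℝ) := by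
      have : (1:ℝ) ≤ (n:ℝ) := by exact_mod_cast hn1
      linarith
    have hexp : (1 + 1/(n:ℝ)) ≤ Real.exp (1/(n:ℝ)) := by
      have := Real.add_one_le_exp (1/(n:ℝ)); linarith
    have h1n : (1 + 1/(n:ℝ))^n ≤ Real.exp 1 := by
      calc (1 + 1/(n:ℝ))^n ≤ (Real.exp (1/(n:ℝ)))^n := by
            apply pow_le_pow_left₀ (by positivity) hexp
        _ = Real.exp ((n:ℝ) * (1/(n:ℝ))) := by rw [← Real.exp_nat_mul]
        _ = Real.exp 1 := by rw [mul_one_div, div_self (ne_of_gt hnpos)]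
    have hlt3 : (1 + 1/(n:ℝ))^n < 3 := by
      have := Real.exp_one_lt_d9
      calc (1 + 1/(n:ℝ))^n ≤ Real.exp 1 := h1n
        _ < 3 := by linarith
    have hprod : (1 - 1/(K:ℝ))^n * (1 + 1/(n:ℝ))^n = 1 := by
      rw [← mul_pow]
      have hbase : (1 - 1/(K:ℝ)) * (1 + 1/(n:ℝ)) = 1 := by
        rw [hKn]; field_simp; ring
      rw [hbase, one_pow]
    have hpow_pos : (0:ℝ) < (1 + 1/(n:ℝ))^n := by positivity
    nlinarith [hprod, hlt3, hpow_pos]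

lemma harith_aux : ∀ P N Om : ℕ, P * 4 = Om → P + N = Om → N * 4 ≤ Om * 3 := by
  intro P N Om h1 h2; omega

lemma colorable_of (d m : ℕ) (hm : 1 ≤ m) (hd : 1 ≤ d)
    (hcond : ((3:ℝ)/4)^m * (3 * (m * (2*d+4))) ≤ 1) : TreesColorable d m := by
  intro V _ T htree hdeg
  classical
  -- parent maps
  choose p hp1 hp2 using fun j => exists_parent (T j) (htree j)
  set K := m * (2*d+4) with hKdef
  have hK6 : 6 ≤ K := by
    calc 6 = 1 * 6 := by ring
      _ ≤ m * (2*d+4) := Nat.mul_le_mul hm (by omega)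
  -- sample space
  set ι := V × Fin m
  -- the "covered via tree j" pattern
  set covj : Fin m → V → (ι → Bool) → Prop :=
    fun j v x => x (v, j) = true ∧ (p j v = v ∨ x (p j v, j) = false) with hcovj
  set A : V → Finset (ι → Bool) :=
    fun v => Finset.univ.filter (fun x => ∀ j ∈ (Finset.univ : Finset (Fin m)), ¬ covj j v x)
    with hAdef
  set sv : V → Finset ι :=
    fun v => Finset.univ.biUnion (fun j : Fin m => {(v, j), (p j v, j)}) with hsvdef
  have hmem_sv : ∀ v (j : Fin m), (v, j) ∈ sv v ∧ (p j v, j) ∈ sv v := by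
    intro v j
    constructor <;> · exact Finset.mem_biUnion.mpr ⟨j, Finset.mem_univ j, by simp⟩
  have hdet : ∀ v (x y : ι → Bool), (∀ i ∈ sv v, x i = y i) → (x ∈ A v ↔ y ∈ A v) := by
    intro v x y hagree
    simp only [hAdef, Finset.mem_filter, Finset.mem_univ, true_and]
    have : ∀ j : Fin m, covj j v x ↔ covj j v y := by
      intro j
      have hx1 := hagree _ (hmem_sv v j).1
      have hx2 := hagree _ (hmem_sv v j).2
      simp only [hcovj]
      rw [hx1, hx2]
    constructor
    · intro h j hj hc; exact h j hj ((this j).mpr hc)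
    · intro h j hj hc; exact h j hj ((this j).mp hc)
  set Γ : V → Finset V :=
    fun v => Finset.univ.filter
      (fun u => ∃ j : Fin m, u = v ∨ u = p j v ∨ p j u = v ∨ p j u = p j v) with hΓdef
  have hself : ∀ v, v ∈ Γ v := by
    intro v
    simp only [hΓdef, Finset.mem_filter, Finset.mem_univ, true_and]
    exact ⟨⟨0, hm⟩, by simp⟩
  -- degree bound for "children" sets
  have hCh : ∀ (j : Fin m) (w : V),
      (Finset.univ.filter (fun u => p j u = w)).card ≤ d + 1 := by
    intro j w
    have hsub : Finset.univ.filter (fun u => p j u = w)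
        ⊆ insert w ((T j).neighborFinset w) := by
      intro u hu
      have hu' : p j u = w := (Finset.mem_filter.mp hu).2
      by_cases huw : u = w
      · exact Finset.mem_insert.mpr (Or.inl huw)
      · rcases hp1 j u with h | h
        · exact absurd (h ▸ hu') huw
        · refine Finset.mem_insert.mpr (Or.inr ?_)
          rw [SimpleGraph.mem_neighborFinset]
          exact ((hu' ▸ h) : (T j).Adj u w).symm
    calc (Finset.univ.filter (fun u => p j u = w)).card
        ≤ (insert w ((T j).neighborFinset w)).card := Finset.card_le_card hsub
      _ ≤ ((T j).neighborFinset w).card + 1 := Finset.card_insert_le _ _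
      _ ≤ d + 1 := by
          have h1 : ((T j).neighborFinset w).card = ((T j).neighborSet w).ncard := by
            rw [SimpleGraph.neighborFinset_def, Set.ncard_eq_toFinset_card']
          have h2 : ((T j).neighborSet w).ncard ≤ maxDeg (T j) :=
            Finset.le_sup (f := fun v => ((T j).neighborSet v).ncard) (Finset.mem_univ w)
          have := hdeg j
          omega
  have hΓcard : ∀ v, (Γ v).card ≤ K := by
    intro v
    have hsub : Γ v ⊆ Finset.univ.biUnion (fun j : Fin m =>
        ({v, p j v} : Finset V) ∪ Finset.univ.filter (fun u => p j u = v)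
          ∪ Finset.univ.filter (fun u => p j u = p j v)) := by
      intro u hu
      obtain ⟨j, hj⟩ := (Finset.mem_filter.mp hu).2
      refine Finset.mem_biUnion.mpr ⟨j, Finset.mem_univ j, ?_⟩
      simp only [Finset.mem_union, Finset.mem_insert, Finset.mem_singleton,
        Finset.mem_filter, Finset.mem_univ, true_and]
      tauto
    calc (Γ v).card
        ≤ (Finset.univ.biUnion (fun j : Fin m =>
            ({v, p j v} : Finset V) ∪ Finset.univ.filter (fun u => p j u = v)
              ∪ Finset.univ.filter (fun u => p j u = p j v))).card :=
          Finset.card_le_card hsub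
      _ ≤ ∑ j : Fin m, (({v, p j v} : Finset V) ∪ Finset.univ.filter (fun u => p j u = v)
              ∪ Finset.univ.filter (fun u => p j u = p j v)).card :=
          Finset.card_biUnion_le
      _ ≤ ∑ _j : Fin m, (2*d+4) := by
          apply Finset.sum_le_sum
          intro j _
          calc (({v, p j v} : Finset V) ∪ Finset.univ.filter (fun u => p j u = v)
              ∪ Finset.univ.filter (fun u => p j u = p j v)).card
              ≤ (({v, p j v} : Finset V) ∪ Finset.univ.filter (fun u => p j u = v)).card
                + (Finset.univ.filter (fun u => p j u = p j v)).card :=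
                Finset.card_union_le _ _
            _ ≤ ({v, p j v} : Finset V).card
                + (Finset.univ.filter (fun u => p j u = v)).card
                + (Finset.univ.filter (fun u => p j u = p j v)).card := by
                have := Finset.card_union_le ({v, p j v} : Finset V)
                  (Finset.univ.filter (fun u => p j u = v))
                omega
            _ ≤ 2 + (d+1) + (d+1) := by
                have h1 : ({v, p j v} : Finset V).card ≤ 2 := by
                  apply le_trans (Finset.card_insert_le _ _)
                  simp
                have h2 := hCh j v
                have h3 := hCh j (p j v)
                omega
            _ = 2*d+4 := by ring
      _ = m * (2*d+4) := by
          rw [Finset.sum_const, Finset.card_univ, Fintype.card_fin]; ring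
  -- independence hypothesis
  have hΩpos : 0 < Fintype.card (ι → Bool) := Fintype.card_pos
  have hind : ∀ (v : V) (S : Finset V), (∀ u ∈ S, u ∉ Γ v) →
      ((A v ∩ capC A S).card : ℝ) * (Fintype.card (ι → Bool) : ℝ)
        = ((A v).card : ℝ) * ((capC A S).card : ℝ) := by
    intro v S hS
    have hdisj : Disjoint (sv v) (S.biUnion sv) := by
      rw [Finset.disjoint_left]
      rintro ⟨w, j⟩ hwv hwS
      obtain ⟨u, huS, hwu⟩ := Finset.mem_biUnion.mp hwS
      obtain ⟨j1, _, hj1⟩ := Finset.mem_biUnion.mp hwv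
      obtain ⟨j2, _, hj2⟩ := Finset.mem_biUnion.mp hwu
      have hnot := hS u huS
      simp only [hΓdef, Finset.mem_filter, Finset.mem_univ, true_and, not_exists] at hnot
      have split : ∀ (a : V) (jx : Fin m), (w, j) ∈ ({(a, jx), (p jx a, jx)} : Finset ι) →
          w = a ∨ w = p j a := by
        intro a jx hmem
        rcases Finset.mem_insert.mp hmem with h | h
        · exact Or.inl (Prod.ext_iff.mp h).1
        · obtain ⟨hw, hj⟩ := Prod.ext_iff.mp (Finset.mem_singleton.mp h)
          subst hj
          exact Or.inr hw
      have hj1' := split v j1 hj1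
      have hj2' := split u j2 hj2
      apply hnot j
      rcases hj1' with h1 | h1 <;> rcases hj2' with h2 | h2
      · exact Or.inl (h2.symm.trans h1)
      · exact Or.inr (Or.inr (Or.inl (h2.symm.trans h1)))
      · exact Or.inr (Or.inl (h2.symm.trans h1))
      · exact Or.inr (Or.inr (Or.inr (h2.symm.trans h1)))
    have hdetcap : ∀ x y : ι → Bool, (∀ i ∈ S.biUnion sv, x i = y i) →
        (x ∈ capC A S ↔ y ∈ capC A S) := by
      intro x y hagree
      simp only [mem_capC]
      constructor
      · intro h u hu hyA
        exact h u hu ((hdet u x y (fun i hi =>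
          hagree i (Finset.mem_biUnion.mpr ⟨u, hu, hi⟩))).mpr hyA)
      · intro h u hu hxA
        exact h u hu ((hdet u x y (fun i hi =>
          hagree i (Finset.mem_biUnion.mpr ⟨u, hu, hi⟩))).mp hxA)
    have hmul := card_inter_mul (A v) (capC A S) (sv v) (S.biUnion sv) hdisj
      (hdet v) hdetcap
    exact_mod_cast congrArg (fun n : ℕ => (n : ℝ)) hmul
  -- single-pattern probability bound
  have hΩr : (0:ℝ) < (Fintype.card (ι → Bool) : ℝ) := by exact_mod_cast hΩpos
  have hBcard : ∀ (v : V) (a : Fin m),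
      ((Finset.univ.filter (fun x : ι → Bool => ¬ covj a v x)).card : ℝ)
        ≤ 3/4 * (Fintype.card (ι → Bool) : ℝ) := by
    intro v a
    by_cases hroot : p a v = v
    · have hfeq : Finset.univ.filter (fun x : ι → Bool => ¬ covj a v x)
          = Finset.univ.filter (fun x : ι → Bool => x (v, a) = false) := by
        apply Finset.filter_congr
        intro x _
        simp [hcovj, hroot]
      have h2 := card_coord_eq ((v, a) : ι) false
      rw [hfeq]
      have h2' : ((Finset.univ.filter (fun x : ι → Bool => x (v, a) = false)).card : ℝ) * 2
          = (Fintype.card (ι → Bool) : ℝ) := by exact_mod_cast h2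
      linarith
    · have hne : ((v, a) : ι) ≠ (p a v, a) := by
        intro h
        exact hroot ((Prod.ext_iff.mp h).1).symm
      have hfeq : Finset.univ.filter (fun x : ι → Bool => ¬ covj a v x)
          = Finset.univ.filter
              (fun x : ι → Bool => ¬ (x (v, a) = true ∧ x (p a v, a) = false)) := by
        apply Finset.filter_congr
        intro x _
        simp [hcovj, hroot]
      have h4 := card_coord_pair ((v, a) : ι) (p a v, a) hne true false
      have hnat : (Finset.univ.filter
            (fun x : ι → Bool => ¬ (x (v, a) = true ∧ x (p a v, a) = false))).card * 4
          ≤ Fintype.card (ι → Bool) * 3 := by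
        have hsplit := Finset.card_filter_add_card_filter_not
          (s := (Finset.univ : Finset (ι → Bool)))
          (fun x : ι → Bool => (x (v, a) = true ∧ x (p a v, a) = false))
        rw [Finset.card_univ] at hsplit
        exact harith_aux _ _ _ h4 hsplit
      rw [hfeq]
      have hnat' : ((Finset.univ.filter
            (fun x : ι → Bool => ¬ (x (v, a) = true ∧ x (p a v, a) = false))).card : ℝ) * 4
          ≤ (Fintype.card (ι → Bool) : ℝ) * 3 := by exact_mod_cast hnat
      linarith
  -- product bound over a set of trees
  have hAvJ : ∀ (v : V) (J : Finset (Fin m)),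
      ((Finset.univ.filter (fun x : ι → Bool => ∀ j ∈ J, ¬ covj j v x)).card : ℝ)
        ≤ (3/4)^J.card * (Fintype.card (ι → Bool) : ℝ) := by
    intro v J
    induction J using Finset.induction_on with
    | empty =>
      simp
    | @insert a J ha ih =>
      have hsplitJ : Finset.univ.filter (fun x : ι → Bool => ∀ j ∈ insert a J, ¬ covj j v x)
          = (Finset.univ.filter (fun x : ι → Bool => ¬ covj a v x))
            ∩ (Finset.univ.filter (fun x : ι → Bool => ∀ j ∈ J, ¬ covj j v x)) := by
        ext x
        simp only [Finset.mem_filter, Finset.mem_inter, Finset.mem_univ, true_and,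
          Finset.forall_mem_insert]
        try tauto
      have hdisjJ : Disjoint ({((v : V), a), (p a v, a)} : Finset ι)
          (J.biUnion (fun j : Fin m => ({(v, j), (p j v, j)} : Finset ι))) := by
        rw [Finset.disjoint_left]
        rintro ⟨w, j⟩ hw hw2
        obtain ⟨j2, hj2J, hj2⟩ := Finset.mem_biUnion.mp hw2
        have h1 : j = a := by
          rcases Finset.mem_insert.mp hw with h | h
          · exact (Prod.ext_iff.mp h).2
          · exact (Prod.ext_iff.mp (Finset.mem_singleton.mp h)).2
        have h2 : j = j2 := by
          rcases Finset.mem_insert.mp hj2 with h | h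
          · exact (Prod.ext_iff.mp h).2
          · exact (Prod.ext_iff.mp (Finset.mem_singleton.mp h)).2
        rw [h1] at h2
        rw [← h2] at hj2J
        exact ha hj2J
      have hB : ∀ x y : ι → Bool, (∀ i ∈ ({((v : V), a), (p a v, a)} : Finset ι), x i = y i) →
          ((x ∈ Finset.univ.filter (fun x : ι → Bool => ¬ covj a v x))
            ↔ (y ∈ Finset.univ.filter (fun x : ι → Bool => ¬ covj a v x))) := by
        intro x y hag
        have e1 : x (v, a) = y (v, a) := hag _ (Finset.mem_insert_self _ _)
        have e2 : x (p a v, a) = y (p a v, a) := hag _ (by simp)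
        simp only [Finset.mem_filter, Finset.mem_univ, true_and, hcovj]
        rw [e1, e2]
      have hC : ∀ x y : ι → Bool,
          (∀ i ∈ J.biUnion (fun j : Fin m => ({(v, j), (p j v, j)} : Finset ι)), x i = y i) →
          ((x ∈ Finset.univ.filter (fun x : ι → Bool => ∀ j ∈ J, ¬ covj j v x))
            ↔ (y ∈ Finset.univ.filter (fun x : ι → Bool => ∀ j ∈ J, ¬ covj j v x))) := by
        intro x y hag
        simp only [Finset.mem_filter, Finset.mem_univ, true_and]
        have hiff : ∀ j ∈ J, (covj j v x ↔ covj j v y) := by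
          intro j hj
          have e1 : x (v, j) = y (v, j) :=
            hag _ (Finset.mem_biUnion.mpr ⟨j, hj, by simp⟩)
          have e2 : x (p j v, j) = y (p j v, j) :=
            hag _ (Finset.mem_biUnion.mpr ⟨j, hj, by simp⟩)
          simp only [hcovj]
          rw [e1, e2]
        constructor
        · intro h j hj hc; exact h j hj ((hiff j hj).mpr hc)
        · intro h j hj hc; exact h j hj ((hiff j hj).mp hc)
      have hmul := card_inter_mul
        (Finset.univ.filter (fun x : ι → Bool => ¬ covj a v x))
        (Finset.univ.filter (fun x : ι → Bool => ∀ j ∈ J, ¬ covj j v x))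
        ({((v : V), a), (p a v, a)} : Finset ι)
        (J.biUnion (fun j : Fin m => ({(v, j), (p j v, j)} : Finset ι)))
        hdisjJ hB hC
      have hmul' : ((Finset.univ.filter (fun x : ι → Bool => ∀ j ∈ insert a J, ¬ covj j v x)).card : ℝ)
            * (Fintype.card (ι → Bool) : ℝ)
          = ((Finset.univ.filter (fun x : ι → Bool => ¬ covj a v x)).card : ℝ)
            * ((Finset.univ.filter (fun x : ι → Bool => ∀ j ∈ J, ¬ covj j v x)).card : ℝ) := by
        rw [hsplitJ]
        exact_mod_cast congrArg (fun n : ℕ => (n : ℝ)) hmul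
      have hfinal : ((Finset.univ.filter
            (fun x : ι → Bool => ∀ j ∈ insert a J, ¬ covj j v x)).card : ℝ)
            * (Fintype.card (ι → Bool) : ℝ)
          ≤ ((3/4)^(insert a J).card * (Fintype.card (ι → Bool) : ℝ))
            * (Fintype.card (ι → Bool) : ℝ) := by
        rw [hmul', Finset.card_insert_of_notMem ha]
        calc ((Finset.univ.filter (fun x : ι → Bool => ¬ covj a v x)).card : ℝ)
            * ((Finset.univ.filter (fun x : ι → Bool => ∀ j ∈ J, ¬ covj j v x)).card : ℝ)
            ≤ (3/4 * (Fintype.card (ι → Bool) : ℝ))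
              * ((3/4)^J.card * (Fintype.card (ι → Bool) : ℝ)) := by
              apply mul_le_mul (hBcard v a) ih (Nat.cast_nonneg _) (by positivity)
          _ = ((3/4)^(J.card + 1) * (Fintype.card (ι → Bool) : ℝ))
              * (Fintype.card (ι → Bool) : ℝ) := by ring
      exact le_of_mul_le_mul_right hfinal hΩr
  -- the LLL probability hypothesis
  have hKr : (0:ℝ) < (K:ℝ) := by exact_mod_cast (by omega : 0 < K)
  have hpA : ∀ v, ((A v).card : ℝ)
      ≤ (1/(K:ℝ)) * (1 - 1/(K:ℝ))^(K-1) * (Fintype.card (ι → Bool) : ℝ) := by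
    intro v
    have h1 := hAvJ v Finset.univ
    rw [Finset.card_univ, Fintype.card_fin] at h1
    have h3 := one_sub_inv_pow K (by omega)
    have hc' : ((3:ℝ)/4)^m * (3*(K:ℝ)) ≤ 1 := by
      calc ((3:ℝ)/4)^m * (3*(K:ℝ)) = (3/4)^m * (3 * ((m:ℝ) * (2*(d:ℝ)+4))) := by
            rw [hKdef]; push_cast; ring
        _ ≤ 1 := hcond
    have step1 : ((3:ℝ)/4)^m ≤ 1/(3*(K:ℝ)) := by
      rw [le_div_iff₀ (by positivity)]
      linarith
    have h2 : ((3:ℝ)/4)^m ≤ (1/(K:ℝ)) * (1 - 1/(K:ℝ))^(K-1) := by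
      calc ((3:ℝ)/4)^m ≤ 1/(3*(K:ℝ)) := step1
        _ = (1/(K:ℝ)) * (1/3) := by ring
        _ ≤ (1/(K:ℝ)) * (1 - 1/(K:ℝ))^(K-1) := by
            apply mul_le_mul_of_nonneg_left h3 (by positivity)
    calc ((A v).card : ℝ)
        ≤ (3/4)^m * (Fintype.card (ι → Bool) : ℝ) := by rw [hAdef]; exact h1
      _ ≤ ((1/(K:ℝ)) * (1 - 1/(K:ℝ))^(K-1)) * (Fintype.card (ι → Bool) : ℝ) := by
          apply mul_le_mul_of_nonneg_right h2 (Nat.cast_nonneg _)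
  -- run the local lemma
  obtain ⟨hpos, _⟩ := LLL_aux A Γ (1/(K:ℝ)) (K-1)
    (by positivity)
    (by rw [div_lt_one hKr]; exact_mod_cast (by omega : 1 < K))
    hself
    (fun v => by have := hΓcard v; omega)
    hind hpA hΩpos
    (Finset.univ : Finset V).card Finset.univ le_rfl
  have hnonempty : (capC A Finset.univ).Nonempty := by
    rw [← Finset.card_pos]
    exact_mod_cast hpos
  obtain ⟨x₀, hx₀⟩ := hnonempty
  have hcov : ∀ v : V, ∃ j : Fin m, covj j v x₀ := by
    intro v
    have h1 := mem_capC.mp hx₀ v (Finset.mem_univ v)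
    rw [hAdef] at h1
    simp only [Finset.mem_filter, Finset.mem_univ, true_and] at h1
    push_neg at h1
    obtain ⟨j, _, hj⟩ := h1
    exact ⟨j, hj⟩
  refine ⟨fun j => {v | covj j v x₀}, ?_, ?_⟩
  · intro j
    intro u hu v' hv' hadj
    have hu' : covj j u x₀ := hu
    have hv'' : covj j v' x₀ := hv'
    have hkey : ∀ a b : V, covj j a x₀ → covj j b x₀ →
        (T j).Adj a b → p j a = b → False := by
      intro a b hca hcb hab hpab
      simp only [hcovj] at hca hcb
      rcases hca.2 with h | h
      · exact (T j).ne_of_adj hab ((hpab.symm.trans h).symm)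
      · rw [hpab] at h
        rw [hcb.1] at h
        exact Bool.noConfusion h
    rcases hp2 j u v' hadj with h | h
    · exact hkey u v' hu' hv'' hadj h
    · exact hkey v' u hv'' hu' hadj.symm h
  · rw [Set.eq_univ_iff_forall]
    intro v
    obtain ⟨j, hj⟩ := hcov v
    exact Set.mem_iUnion.mpr ⟨j, hj⟩




lemma trees_part1 : ∀ ε : ℝ, 0 < ε → ∃ d₀ : ℕ, ∀ d : ℕ, d₀ ≤ d → ∀ m : ℕ,
    (1 + ε) * Real.logb (4 / 3) d ≤ m → TreesColorable d m := by
  intro ε hε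
  set c := Real.log (4/3) with hcdef
  have hc : 0 < c := Real.log_pos (by norm_num)
  have he : (0:ℝ) < 1 + ε := by linarith
  set δ := c * ε / (1 + ε) with hδdef
  have hδ : 0 < δ := by positivity
  set M : ℝ := max (16/δ^2) (6/δ) with hMdef
  have hM0 : 0 < M := lt_of_lt_of_le (by positivity : (0:ℝ) < 6/δ) (le_max_right _ _)
  refine ⟨max 4 (Nat.ceil (Real.exp (c*M)) + 1), ?_⟩
  intro d hd m hm
  have hd4 : (4:ℝ) ≤ (d:ℝ) := by
    have : 4 ≤ d := le_trans (le_max_left _ _) hd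
    exact_mod_cast this
  have hd1 : (1:ℝ) < (d:ℝ) := by linarith
  have hdpos : (0:ℝ) < (d:ℝ) := by linarith
  have hlogd : 0 < Real.log d := Real.log_pos hd1
  have hexpd : Real.exp (c*M) ≤ (d:ℝ) := by
    have h1 : Nat.ceil (Real.exp (c*M)) + 1 ≤ d := le_trans (le_max_right _ _) hd
    have h2 : Real.exp (c*M) ≤ (Nat.ceil (Real.exp (c*M)) : ℝ) := Nat.le_ceil _
    have h3 : ((Nat.ceil (Real.exp (c*M)) + 1 : ℕ) : ℝ) ≤ d := by exact_mod_cast h1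
    push_cast at h3
    linarith
  have hlogdM : c * M ≤ Real.log d := (Real.le_log_iff_exp_le hdpos).mpr hexpd
  have hmc : (1+ε) * Real.log d ≤ (m:ℝ) * c := by
    have hlogb : Real.logb (4/3) (d:ℝ) = Real.log d / c := by
      rw [Real.logb, hcdef]
    rw [hlogb] at hm
    calc (1+ε) * Real.log d = ((1+ε) * (Real.log d / c)) * c := by field_simp
      _ ≤ (m:ℝ) * c := mul_le_mul_of_nonneg_right hm hc.le
  have hmM : M ≤ (m:ℝ) := by
    have h2 : (1+ε) * (c*M) ≤ (m:ℝ)*c := le_trans (by nlinarith) hmc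
    nlinarith
  have hm6 : 6/δ ≤ (m:ℝ) := le_trans (le_max_right _ _) hmM
  have hm16 : 16/δ^2 ≤ (m:ℝ) := le_trans (le_max_left _ _) hmM
  have hm1 : 1 ≤ m := by
    by_contra h
    push_neg at h
    have hm0 : m = 0 := by omega
    rw [hm0] at hm6
    simp only [Nat.cast_zero] at hm6
    have : (0:ℝ) < 6/δ := by positivity
    linarith
  have hmpos : (0:ℝ) < (m:ℝ) := by
    have : (1:ℝ) ≤ (m:ℝ) := by exact_mod_cast hm1
    linarith
  have hsqrt : 4/δ ≤ Real.sqrt (m:ℝ) := by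
    have h1 : Real.sqrt (16/δ^2) ≤ Real.sqrt (m:ℝ) := Real.sqrt_le_sqrt hm16
    rwa [show (16/δ^2 : ℝ) = (4/δ)^2 by ring, Real.sqrt_sq (by positivity)] at h1
  have hlogm : Real.log m ≤ δ * m / 2 := by
    have h1 : Real.log m = 2 * Real.log (Real.sqrt m) := by
      rw [Real.log_sqrt hmpos.le]; ring
    have h2 : Real.log (Real.sqrt m) ≤ Real.sqrt m :=
      le_trans (Real.log_le_sub_one_of_pos (Real.sqrt_pos.mpr hmpos)) (by linarith)
    have h3 : Real.sqrt (m:ℝ) * Real.sqrt (m:ℝ) = (m:ℝ) := Real.mul_self_sqrt hmpos.le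
    have h4 : 4 ≤ δ * Real.sqrt (m:ℝ) := by
      rw [div_le_iff₀ hδ] at hsqrt
      linarith
    have h5 : (0:ℝ) ≤ δ * (m:ℝ) - 4 * Real.sqrt (m:ℝ) := by
      have h6 := mul_nonneg (Real.sqrt_nonneg (m:ℝ))
        (show (0:ℝ) ≤ δ * Real.sqrt (m:ℝ) - 4 by linarith)
      nlinarith [h3, h6]
    have h7 : (0:ℝ) ≤ Real.sqrt (m:ℝ) := Real.sqrt_nonneg _
    linarith
  have hlog9 : Real.log 9 ≤ 3 := by
    have h2 : Real.exp 3 = Real.exp 1 ^ (3:ℕ) := by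
      rw [← Real.exp_nat_mul]; norm_num
    have h1 : (9:ℝ) ≤ Real.exp 3 := by
      rw [h2]
      have ha : (2.71:ℝ) ≤ Real.exp 1 := le_trans (by norm_num) Real.exp_one_gt_d9.le
      calc (9:ℝ) ≤ (2.71:ℝ)^(3:ℕ) := by norm_num
        _ ≤ Real.exp 1 ^ (3:ℕ) := pow_le_pow_left₀ (by norm_num) ha 3
    calc Real.log 9 ≤ Real.log (Real.exp 3) :=
          Real.log_le_log (by norm_num) h1
      _ = 3 := Real.log_exp 3
  have hδm3 : 3 ≤ δ * m / 2 := by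
    have h1 : δ * (6/δ) ≤ δ * m := mul_le_mul_of_nonneg_left hm6 hδ.le
    have h2 : δ * (6/δ) = 6 := by field_simp
    linarith
  have hkey : Real.log (9 * m * d) ≤ (m:ℝ) * c := by
    have hlogsplit : Real.log (9 * (m:ℝ) * d) = Real.log 9 + Real.log m + Real.log d := by
      rw [Real.log_mul (by positivity) (by positivity),
        Real.log_mul (by norm_num) (by positivity)]
    have h1 : Real.log d + δ * m ≤ (m:ℝ) * c := by
      have hδc : δ * (1+ε) = c * ε := by rw [hδdef]; field_simp
      nlinarith [hmc]
    rw [hlogsplit]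
    linarith
  apply colorable_of d m hm1 (by omega : 1 ≤ d)
  have hpow : ((4:ℝ)/3)^m = Real.exp ((m:ℝ) * c) := by
    have hlp : Real.log (((4:ℝ)/3)^m) = (m:ℝ) * c := by
      rw [Real.log_pow, hcdef]
    rw [← hlp, Real.exp_log (by positivity)]
  have hX : (3:ℝ) * ((m:ℝ) * (2*(d:ℝ)+4)) ≤ 9 * m * d := by nlinarith
  have h9md : (9:ℝ) * m * d ≤ ((4:ℝ)/3)^m := by
    rw [hpow]
    calc (9:ℝ)*m*d = Real.exp (Real.log (9*(m:ℝ)*d)) :=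
          (Real.exp_log (by positivity)).symm
      _ ≤ Real.exp ((m:ℝ)*c) := Real.exp_le_exp.mpr hkey
  have hid : ((3:ℝ)/4)^m * ((4:ℝ)/3)^m = 1 := by
    rw [← mul_pow]; norm_num
  calc ((3:ℝ)/4)^m * (3 * ((m:ℝ) * (2*(d:ℝ)+4)))
      ≤ ((3:ℝ)/4)^m * ((4:ℝ)/3)^m := by
        apply mul_le_mul_of_nonneg_left (le_trans hX h9md) (by positivity)
    _ = 1 := hid

open Filter in
/-- For every `ε > 0`, if `d` is sufficiently large then every `m ≥
(1 + ε) log_{4/3} d` trees of maximum degree at most `d` have a cooperative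
coloring; in particular `m_T(d) ≤ (1 + o(1)) log_{4/3} d`. -/
theorem trees_upper_bound :
    (∀ ε : ℝ, 0 < ε → ∃ d₀ : ℕ, ∀ d : ℕ, d₀ ≤ d → ∀ m : ℕ,
      (1 + ε) * Real.logb (4 / 3) d ≤ m → TreesColorable d m) ∧
    ∃ f : ℕ → ℝ, Tendsto f atTop (nhds 0) ∧
      ∀ᶠ d : ℕ in atTop, (mT d : ℝ) ≤ (1 + f d) * Real.logb (4 / 3) d := by
  constructor
  · exact trees_part1
  · set c := Real.log (4/3) with hcdef
    have hc : 0 < c := Real.log_pos (by norm_num)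
    set L : ℕ → ℝ := fun d => Real.logb (4/3) d with hLdef
    set f : ℕ → ℝ := fun d => max 0 ((mT d : ℝ) / L d - 1) with hfdef
    have hLpos : ∀ d : ℕ, 2 ≤ d → 0 < L d := by
      intro d hd
      have : (1:ℝ) < (d:ℝ) := by
        have : (2:ℝ) ≤ (d:ℝ) := by exact_mod_cast hd
        linarith
      have hld : 0 < Real.log d := Real.log_pos this
      rw [hLdef]
      simp only [Real.logb]
      positivity
    refine ⟨f, ?_, ?_⟩
    · -- Tendsto f atTop (nhds 0)
      rw [Metric.tendsto_atTop]
      intro ε' hε'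
      obtain ⟨d₀, hd₀⟩ := trees_part1 (ε'/4) (by linarith)
      set N : ℕ := max (max d₀ 2) (Nat.ceil (Real.exp (4*c/ε')) + 1) with hNdef
      refine ⟨N, ?_⟩
      intro d hdN
      have hd₀d : d₀ ≤ d := le_trans (le_trans (le_max_left _ _) (le_max_left _ _)) hdN
      have hd2 : 2 ≤ d := le_trans (le_trans (le_max_right _ _) (le_max_left _ _)) hdN
      have hdexp : Real.exp (4*c/ε') ≤ (d:ℝ) := by
        have h1 : Nat.ceil (Real.exp (4*c/ε')) + 1 ≤ d := le_trans (le_max_right _ _) hdN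
        have h2 : Real.exp (4*c/ε') ≤ (Nat.ceil (Real.exp (4*c/ε')) : ℝ) := Nat.le_ceil _
        have h3 : ((Nat.ceil (Real.exp (4*c/ε')) + 1 : ℕ) : ℝ) ≤ d := by exact_mod_cast h1
        push_cast at h3
        linarith
      have hdpos : (0:ℝ) < (d:ℝ) := by
        have : (2:ℝ) ≤ (d:ℝ) := by exact_mod_cast hd2
        linarith
      have hL : 0 < L d := hLpos d hd2
      have hLbig : 4*c/ε' ≤ Real.log d := (Real.le_log_iff_exp_le hdpos).mpr hdexp
      have hLge : 4/ε' ≤ L d := by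
        rw [hLdef]
        simp only [Real.logb]
        rw [le_div_iff₀ hc]
        calc 4/ε' * Real.log (4/3) = 4*(Real.log (4/3))/ε' := by ring
          _ ≤ Real.log d := hLbig
      -- upper bound on mT d
      set mub : ℕ := Nat.ceil ((1 + ε'/4) * L d) with hmubdef
      have hcolor : TreesColorable d mub := by
        apply hd₀ d hd₀d
        calc (1 + ε'/4) * Real.logb (4/3) (d:ℝ) = (1 + ε'/4) * L d := by rw [hLdef]
          _ ≤ (mub : ℝ) := Nat.le_ceil _
      have hmTle : mT d ≤ mub := Nat.sInf_le hcolor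
      have hmuble : (mub : ℝ) ≤ (1 + ε'/4) * L d + 1 := by
        rw [hmubdef]
        have := Nat.ceil_lt_add_one (by positivity : (0:ℝ) ≤ (1 + ε'/4) * L d)
        linarith
      have hmTr : (mT d : ℝ) ≤ (1 + ε'/4) * L d + 1 := by
        have : (mT d : ℝ) ≤ (mub : ℝ) := by exact_mod_cast hmTle
        linarith
      have hfd : f d ≤ 3*ε'/4 := by
        rw [hfdef]
        apply max_le (by linarith)
        -- mT d / L d - 1 ≤ ε'/4 + 1/L d ≤ ε'/4 + ε'/4
        have h1 : (mT d : ℝ) / L d ≤ (1 + ε'/4) + 1 / L d := by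
          rw [div_le_iff₀ hL]
          calc (mT d : ℝ) ≤ (1 + ε'/4) * L d + 1 := hmTr
            _ = ((1 + ε'/4) + 1/L d) * L d := by field_simp
        have h2 : 1 / L d ≤ ε'/4 := by
          rw [div_le_iff₀ hL]
          have h5 := mul_le_mul_of_nonneg_right hLge
            (le_of_lt (show (0:ℝ) < ε'/4 by linarith))
          have h4 : (4/ε') * (ε'/4) = 1 := by field_simp
          nlinarith
        linarith
      have hfd0 : 0 ≤ f d := le_max_left _ _
      rw [Real.dist_eq, sub_zero, abs_of_nonneg hfd0]
      linarith
    · -- eventual bound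
      rw [eventually_atTop]
      refine ⟨2, ?_⟩
      intro d hd2
      have hL : 0 < L d := hLpos d hd2
      have hf1 : (mT d : ℝ) / L d - 1 ≤ f d := le_max_right _ _
      have h2 : (mT d : ℝ) / L d ≤ 1 + f d := by linarith
      have h3 : (mT d : ℝ) = ((mT d : ℝ) / L d) * L d := by field_simp
      calc (mT d : ℝ) = ((mT d : ℝ) / L d) * L d := h3
        _ ≤ (1 + f d) * L d := mul_le_mul_of_nonneg_right h2 hL.le
        _ = (1 + f d) * Real.logb (4/3) (d:ℕ) := by rw [hLdef]
end

section
/- For every integer m ≥ 1, consider the vertex set V = {0,1}^m, and for each j ∈ {1,…,m} let G_j be the complete bipartite graph on V joining every u with u_j = 0 to every v with v_j = 1 (i.e., u and v are adjacent in G_j if and only if u_j ≠ v_j). Each G_j is bipartite of maximum degree 2^(m-1), and the system (G_1, …, G_m) has no cooperative coloring. -/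
/-- A graph is bipartite: its vertex set can be split into two sides such that
every edge goes between the sides (equivalently, the two sides are independent). -/
def IsBipart {V : Type*} (G : SimpleGraph V) : Prop :=
  ∃ A : Set V, ∀ ⦃u v⦄, G.Adj u v → (u ∈ A ↔ v ∉ A)

/-- `coordGraph m j`: the complete bipartite graph on `{0,1}^m` joining every
vertex whose `j`-th coordinate is `0` to every vertex whose `j`-th coordinate
is `1`. -/
def coordGraph (m : ℕ) (j : Fin m) : SimpleGraph (Fin m → Bool) where
  Adj u v := u j ≠ v j
  symm := ⟨fun _ _ h => Ne.symm h⟩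
  loopless := ⟨fun _ h => h rfl⟩

/-- Equivalence for counting. -/
def fixEquiv (m : ℕ) (j : Fin m) (b : Bool) :
    {u : Fin m → Bool // u j = b} ≃ ({i : Fin m // i ≠ j} → Bool) where
  toFun u i := u.1 i.1
  invFun f := ⟨fun i => if h : i = j then b else f ⟨i, h⟩, by simp⟩
  left_inv u := by
    ext i
    by_cases h : i = j
    · subst h; simp [u.2]
    · simp [h]
  right_inv f := by
    ext i
    simp [i.2]

lemma neighbor_card (m : ℕ) (hm : 1 ≤ m) (j : Fin m) (v : Fin m → Bool) :
    ((coordGraph m j).neighborSet v).ncard = 2 ^ (m - 1) := by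
  have hset : (coordGraph m j).neighborSet v = {u | u j = !v j} := by
    ext u
    simp only [SimpleGraph.mem_neighborSet, coordGraph, Set.mem_setOf_eq]
    cases v j <;> cases u j <;> simp
  rw [hset, Set.ncard_eq_toFinset_card']
  have : Fintype.card {u : Fin m → Bool // u j = !v j} = 2 ^ (m - 1) := by
    rw [Fintype.card_congr (fixEquiv m j (!v j)), Fintype.card_fun,
      Fintype.card_bool, Fintype.card_subtype_compl]
    simp
  rw [Set.toFinset_card]
  exact this

/-- Each `coordGraph m j` is bipartite of maximum degree `2 ^ (m - 1)`, and the
system `(coordGraph m j)_{j}` has no cooperative coloring. -/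
theorem coordGraphs_no_coop_coloring (m : ℕ) (hm : 1 ≤ m) :
    (∀ j, IsBipart (coordGraph m j)) ∧
    (∀ j, maxDeg (coordGraph m j) = 2 ^ (m - 1)) ∧
    ¬ HasCoopColoring (coordGraph m) := by
  refine ⟨?_, ?_, ?_⟩
  · intro j
    refine ⟨{u | u j = true}, fun u v h => ?_⟩
    simp only [Set.mem_setOf_eq]
    revert h
    show u j ≠ v j → _
    cases u j <;> cases v j <;> simp
  · intro j
    unfold maxDeg
    have : ∀ v : Fin m → Bool, ((coordGraph m j).neighborSet v).ncard = 2 ^ (m - 1) :=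
      neighbor_card m hm j
    simp only [this]
    exact Finset.sup_const Finset.univ_nonempty _
  · rintro ⟨I, hind, hcov⟩
    classical
    set w : Fin m → Bool := fun j => decide (∀ u ∈ I j, u j = false) with hw
    have : w ∈ ⋃ j, I j := hcov ▸ Set.mem_univ w
    obtain ⟨_, ⟨j, rfl⟩, hj⟩ := this
    by_cases h : ∀ u ∈ I j, u j = false
    · have hwj : w j = true := by simp only [hw, decide_eq_true_eq]; exact h
      have := h w hj
      rw [hwj] at this
      exact absurd this (by simp)
    · push_neg at h
      obtain ⟨u, hu, huj⟩ := h
      have hwj : w j = false := by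
        simp only [hw, decide_eq_false_iff_not]
        push_neg
        exact ⟨u, hu, huj⟩
      have : u j = true := by cases hval : u j; exact absurd hval huj; rfl
      exact hind j hu hj (by show u j ≠ w j; rw [this, hwj]; simp)
end

section
/- For every integer d ≥ 2, there exists a finite vertex set V and a system of ⌈log₂ d⌉ bipartite simple graphs on V, each of maximum degree at most d, that has no cooperative coloring; consequently m_B(d) > log₂ d, where B is the class of bipartite graphs. -/
open scoped Classical

/-- Every system of `m` bipartite graphs of maximum degree at most `d` on a
common finite vertex set has a cooperative coloring. -/
def BipartiteColorable (d m : ℕ) : Prop :=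
  ∀ (V : Type) [Fintype V] (G : Fin m → SimpleGraph V),
    (∀ i, IsBipart (G i)) → (∀ i, maxDeg (G i) ≤ d) → HasCoopColoring G

/-- `m_B(d)`: the least `m` such that every `m` bipartite graphs of maximum
degree at most `d` on a common finite vertex set have a cooperative coloring. -/
noncomputable def mB (d : ℕ) : ℕ := sInf {m | BipartiteColorable d m}

/-! ### Auxiliary development -/

namespace CoopAux

open Finset

variable {V : Type} [Fintype V] {m d : ℕ}

/-- All "conflict triples": ordered pairs of adjacent vertices, tagged by a graph index. -/
noncomputable def trips (G : Fin m → SimpleGraph V) : Finset (V × V × Fin m) :=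
  Finset.univ.filter fun t => (G t.2.2).Adj t.1 t.2.1

/-- Colorings avoiding all conflicts in `S`. -/
noncomputable def ok (S : Finset (V × V × Fin m)) : Finset (V → Fin m) :=
  Finset.univ.filter fun f => ∀ t ∈ S, ¬ (f t.1 = t.2.2 ∧ f t.2.1 = t.2.2)

lemma mem_ok {S : Finset (V × V × Fin m)} {f : V → Fin m} :
    f ∈ ok S ↔ ∀ t ∈ S, ¬ (f t.1 = t.2.2 ∧ f t.2.1 = t.2.2) := by
  simp [ok]

lemma ok_mono {S S' : Finset (V × V × Fin m)} (h : S ⊆ S') : ok S' ⊆ ok S := by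
  intro f hf
  rw [mem_ok] at hf ⊢
  exact fun t ht => hf t (h ht)

lemma count_fix (S : Finset (V × V × Fin m)) (u w : V) (huw : u ≠ w) (i : Fin m)
    (hS : ∀ t ∈ S, t.1 ≠ u ∧ t.1 ≠ w ∧ t.2.1 ≠ u ∧ t.2.1 ≠ w) :
    (ok S).card = m * m * ((ok S).filter fun f => f u = i ∧ f w = i).card := by
  classical
  set F : Fin m × Fin m → Finset (V → Fin m) :=
    fun p => (ok S).filter fun f => (f u, f w) = p with hF
  have hupd : ∀ (f : V → Fin m) (a b : Fin m), f ∈ ok S →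
      Function.update (Function.update f u a) w b ∈ ok S := by
    intro f a b hf
    rw [mem_ok] at hf ⊢
    intro t ht
    obtain ⟨h1, h2, h3, h4⟩ := hS t ht
    simp only [Function.update_of_ne h1, Function.update_of_ne h2,
      Function.update_of_ne h3, Function.update_of_ne h4]
    exact hf t ht
  have hval : ∀ (f : V → Fin m) (a b : Fin m),
      Function.update (Function.update f u a) w b u = a ∧
      Function.update (Function.update f u a) w b w = b := by
    intro f a b
    constructor
    · rw [Function.update_of_ne huw, Function.update_self]
    · rw [Function.update_self]
  have hfib : ∀ p : Fin m × Fin m, (F p).card = (F (i, i)).card := by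
    rintro ⟨p1, p2⟩
    refine Finset.card_bij'
      (fun f _ => Function.update (Function.update f u i) w i)
      (fun f _ => Function.update (Function.update f u p1) w p2) ?_ ?_ ?_ ?_
    · intro f hf
      simp only [F, mem_filter, Prod.mk.injEq] at hf ⊢
      exact ⟨hupd _ _ _ hf.1, hval _ _ _⟩
    · intro f hf
      simp only [F, mem_filter, Prod.mk.injEq] at hf ⊢
      exact ⟨hupd _ _ _ hf.1, hval _ _ _⟩
    · intro f hf
      simp only [F, mem_filter, Prod.mk.injEq] at hf
      obtain ⟨_, hfu, hfw⟩ := hf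
      funext x
      rcases eq_or_ne x w with rfl | hxw
      · simp [hfw]
      rcases eq_or_ne x u with rfl | hxu
      · simp [Function.update_of_ne huw, hfu]
      · simp [Function.update_of_ne hxw, Function.update_of_ne hxu]
    · intro f hf
      simp only [F, mem_filter, Prod.mk.injEq] at hf
      obtain ⟨_, hfu, hfw⟩ := hf
      funext x
      rcases eq_or_ne x w with rfl | hxw
      · simp [hfw]
      rcases eq_or_ne x u with rfl | hxu
      · simp [Function.update_of_ne huw, hfu]
      · simp [Function.update_of_ne hxw, Function.update_of_ne hxu]
  have hpart : (ok S).card = ∑ p : Fin m × Fin m, (F p).card :=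
    Finset.card_eq_sum_card_fiberwise (fun f _ => mem_univ (f u, f w))
  have hfilter : ((ok S).filter fun f => f u = i ∧ f w = i) = F (i, i) := by
    simp only [F]
    apply Finset.filter_congr
    intro f _
    simp [Prod.ext_iff]
  rw [hpart, Finset.sum_congr rfl fun p _ => hfib p, Finset.sum_const, Finset.card_univ,
    hfilter]
  simp [Fintype.card_prod, Fintype.card_fin, mul_assoc]

lemma deg_filter_card (G : Fin m → SimpleGraph V) (hdeg : ∀ i, maxDeg (G i) ≤ d)
    (i : Fin m) (u : V) :
    (Finset.univ.filter fun w => (G i).Adj u w).card ≤ d := by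
  classical
  have h1 : ((G i).neighborSet u).ncard = (Finset.univ.filter fun w => (G i).Adj u w).card := by
    rw [Set.ncard_eq_toFinset_card']
    congr 1
    ext w
    simp
  have h2 : ((G i).neighborSet u).ncard ≤ maxDeg (G i) :=
    Finset.le_sup (f := fun v => ((G i).neighborSet v).ncard) (mem_univ u)
  rw [h1] at h2
  exact h2.trans (hdeg i)

lemma card_fst (G : Fin m → SimpleGraph V) (hdeg : ∀ i, maxDeg (G i) ≤ d) (u : V) :
    ((trips G).filter fun s => s.1 = u).card ≤ m * d := by
  classical
  have hsub : ((trips G).filter fun s => s.1 = u) ⊆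
      Finset.univ.biUnion (fun i : Fin m =>
        (Finset.univ.filter fun w => (G i).Adj u w).image fun w => (u, w, i)) := by
    intro s hs
    rw [mem_filter] at hs
    obtain ⟨hst, h1⟩ := hs
    rw [trips, mem_filter] at hst
    refine Finset.mem_biUnion.mpr ⟨s.2.2, mem_univ _, Finset.mem_image.mpr ⟨s.2.1, ?_, ?_⟩⟩
    · rw [mem_filter]
      exact ⟨mem_univ _, h1 ▸ hst.2⟩
    · rw [← h1]
  calc ((trips G).filter fun s => s.1 = u).card
      ≤ _ := Finset.card_le_card hsub
    _ ≤ ∑ i : Fin m, ((Finset.univ.filter fun w => (G i).Adj u w).image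
          fun w => (u, w, i)).card := Finset.card_biUnion_le
    _ ≤ ∑ _i : Fin m, d := by
        refine Finset.sum_le_sum fun i _ => ?_
        exact (Finset.card_image_le).trans (deg_filter_card G hdeg i u)
    _ = m * d := by simp [mul_comm]

lemma card_snd (G : Fin m → SimpleGraph V) (hdeg : ∀ i, maxDeg (G i) ≤ d) (u : V) :
    ((trips G).filter fun s => s.2.1 = u).card ≤ m * d := by
  classical
  have hsub : ((trips G).filter fun s => s.2.1 = u) ⊆
      Finset.univ.biUnion (fun i : Fin m =>
        (Finset.univ.filter fun w => (G i).Adj u w).image fun w => (w, u, i)) := by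
    intro s hs
    rw [mem_filter] at hs
    obtain ⟨hst, h1⟩ := hs
    rw [trips, mem_filter] at hst
    refine Finset.mem_biUnion.mpr ⟨s.2.2, mem_univ _, Finset.mem_image.mpr ⟨s.1, ?_, ?_⟩⟩
    · rw [mem_filter]
      refine ⟨mem_univ _, ((G s.2.2).adj_comm _ _).mp (h1 ▸ hst.2)⟩
    · rw [← h1]
  calc ((trips G).filter fun s => s.2.1 = u).card
      ≤ _ := Finset.card_le_card hsub
    _ ≤ ∑ i : Fin m, ((Finset.univ.filter fun w => (G i).Adj u w).image
          fun w => (w, u, i)).card := Finset.card_biUnion_le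
    _ ≤ ∑ _i : Fin m, d := by
        refine Finset.sum_le_sum fun i _ => ?_
        exact (Finset.card_image_le).trans (deg_filter_card G hdeg i u)
    _ = m * d := by simp [mul_comm]

lemma main (G : Fin m → SimpleGraph V) (hdeg : ∀ i, maxDeg (G i) ≤ d)
    (hm : 16 * (m * d) ≤ m * m) :
    ∀ N (S : Finset (V × V × Fin m)), S ⊆ trips G → S.card ≤ N →
      ∀ t ∈ trips G,
        m * m * ((ok S).filter fun f => f t.1 = t.2.2 ∧ f t.2.1 = t.2.2).card
          ≤ 2 * (ok S).card := by
  classical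
  intro N
  induction N with
  | zero =>
    intro S hSsub hScard t ht
    obtain ⟨u, w, i⟩ := t
    rw [trips, mem_filter] at ht
    have huw : u ≠ w := (ht.2).ne
    have hSempty : S = ∅ := Finset.card_eq_zero.mp (Nat.le_zero.mp hScard)
    subst hSempty
    show m * m * ((ok (∅ : Finset (V × V × Fin m))).filter
      fun f => f u = i ∧ f w = i).card ≤ 2 * (ok (∅ : Finset (V × V × Fin m))).card
    rw [← count_fix ∅ u w huw i (by simp)]
    exact Nat.le_mul_of_pos_left _ two_pos
  | succ N ih =>
    intro S hSsub hScard t ht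
    rcases Nat.eq_zero_or_pos m with rfl | hm0
    · simp
    obtain ⟨u, w, i⟩ := t
    have hadj : (G i).Adj u w := by
      rw [trips, mem_filter] at ht; exact ht.2
    have huw : u ≠ w := hadj.ne
    show m * m * ((ok S).filter fun f => f u = i ∧ f w = i).card ≤ 2 * (ok S).card
    set p : V × V × Fin m → Prop :=
      fun s => s.1 = u ∨ s.1 = w ∨ s.2.1 = u ∨ s.2.1 = w with hp
    set S₁ : Finset (V × V × Fin m) := S.filter p with hS₁
    set S₂ : Finset (V × V × Fin m) := S.filter fun s => ¬ p s with hS₂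
    clear_value S₁ S₂
    have hS₂avoid : ∀ s ∈ S₂, s.1 ≠ u ∧ s.1 ≠ w ∧ s.2.1 ≠ u ∧ s.2.1 ≠ w := by
      intro s hs
      simp only [hS₂, hp, mem_filter, not_or] at hs
      exact hs.2
    have hA : (ok S₂).card = m * m * ((ok S₂).filter fun f => f u = i ∧ f w = i).card :=
      count_fix S₂ u w huw i hS₂avoid
    have hS₂S : S₂ ⊆ S := by rw [hS₂]; exact Finset.filter_subset _ _
    have hB : ((ok S).filter fun f => f u = i ∧ f w = i) ⊆
        ((ok S₂).filter fun f => f u = i ∧ f w = i) :=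
      Finset.filter_subset_filter _ (ok_mono hS₂S)
    have hC : (ok S₂).card ≤ 2 * (ok S).card := by
      rcases Finset.eq_empty_or_nonempty S₁ with hS₁e | hS₁ne
      · have : S₂ = S := by
          rw [hS₂]
          refine Finset.filter_true_of_mem ?_
          intro s hs
          by_contra hps
          have : s ∈ S₁ := by
            rw [hS₁, mem_filter]
            exact ⟨hs, hps⟩
          simp [hS₁e] at this
        rw [this]
        exact Nat.le_mul_of_pos_left _ two_pos
      · have hS₂card : S₂.card ≤ N := by
          obtain ⟨s₀, hs₀⟩ := hS₁ne
          rw [hS₁, mem_filter] at hs₀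
          have hss : S₂ ⊂ S := by
            refine Finset.ssubset_iff_of_subset hS₂S |>.mpr ⟨s₀, hs₀.1, ?_⟩
            intro hmem
            rw [hS₂, mem_filter] at hmem
            exact hmem.2 hs₀.2
          exact Nat.lt_succ_iff.mp (lt_of_lt_of_le (Finset.card_lt_card hss) hScard)
        have hcover : ok S₂ ⊆ ok S ∪ S₁.biUnion
            (fun s => (ok S₂).filter fun f => f s.1 = s.2.2 ∧ f s.2.1 = s.2.2) := by
          intro f hf
          by_cases hfS : f ∈ ok S
          · exact Finset.mem_union_left _ hfS
          · refine Finset.mem_union_right _ ?_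
            rw [mem_ok] at hfS
            push_neg at hfS
            obtain ⟨s, hsS, hfs⟩ := hfS
            have hsS₁ : s ∈ S₁ := by
              rw [hS₁, mem_filter]
              refine ⟨hsS, ?_⟩
              by_contra hps
              have hsS₂ : s ∈ S₂ := by rw [hS₂, mem_filter]; exact ⟨hsS, hps⟩
              exact (mem_ok.mp hf s hsS₂) hfs
            exact Finset.mem_biUnion.mpr ⟨s, hsS₁, by rw [mem_filter]; exact ⟨hf, hfs⟩⟩
        have hcard1 : (ok S₂).card ≤ (ok S).card +
            ∑ s ∈ S₁, ((ok S₂).filter fun f => f s.1 = s.2.2 ∧ f s.2.1 = s.2.2).card := by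
          calc (ok S₂).card ≤ _ := Finset.card_le_card hcover
            _ ≤ (ok S).card + (S₁.biUnion _).card := Finset.card_union_le _ _
            _ ≤ _ := by gcongr; exact Finset.card_biUnion_le
        have hIH : ∀ s ∈ S₁,
            m * m * ((ok S₂).filter fun f => f s.1 = s.2.2 ∧ f s.2.1 = s.2.2).card
              ≤ 2 * (ok S₂).card := by
          intro s hs
          have hsS : s ∈ S := by
            rw [hS₁] at hs
            exact Finset.mem_of_mem_filter _ hs
          exact ih S₂ (hS₂S.trans hSsub) hS₂card s (hSsub hsS)
        have hS₁card : S₁.card ≤ 4 * (m * d) := by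
          have h4 : S₁ ⊆ (((trips G).filter fun s => s.1 = u) ∪
              ((trips G).filter fun s => s.1 = w)) ∪
              (((trips G).filter fun s => s.2.1 = u) ∪
              ((trips G).filter fun s => s.2.1 = w)) := by
            intro s hs
            rw [hS₁, mem_filter] at hs
            have hst : s ∈ trips G := hSsub hs.1
            rcases hs.2 with h | h | h | h
            · exact Finset.mem_union_left _ (Finset.mem_union_left _ (by
                rw [mem_filter]; exact ⟨hst, h⟩))
            · exact Finset.mem_union_left _ (Finset.mem_union_right _ (by
                rw [mem_filter]; exact ⟨hst, h⟩))
            · exact Finset.mem_union_right _ (Finset.mem_union_left _ (by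
                rw [mem_filter]; exact ⟨hst, h⟩))
            · exact Finset.mem_union_right _ (Finset.mem_union_right _ (by
                rw [mem_filter]; exact ⟨hst, h⟩))
          have b1 := card_fst G hdeg u
          have b2 := card_fst G hdeg w
          have b3 := card_snd G hdeg u
          have b4 := card_snd G hdeg w
          calc S₁.card ≤ _ := Finset.card_le_card h4
            _ ≤ (((trips G).filter fun s => s.1 = u) ∪
                  ((trips G).filter fun s => s.1 = w)).card +
                ((((trips G).filter fun s => s.2.1 = u) ∪
                  ((trips G).filter fun s => s.2.1 = w))).card := Finset.card_union_le _ _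
            _ ≤ (((trips G).filter fun s => s.1 = u).card +
                  ((trips G).filter fun s => s.1 = w).card) +
                (((trips G).filter fun s => s.2.1 = u).card +
                  ((trips G).filter fun s => s.2.1 = w).card) :=
                Nat.add_le_add (Finset.card_union_le _ _) (Finset.card_union_le _ _)
            _ ≤ (m * d + m * d) + (m * d + m * d) :=
                Nat.add_le_add (Nat.add_le_add b1 b2) (Nat.add_le_add b3 b4)
            _ = 4 * (m * d) := by ring
        have step : m * m * (ok S₂).card ≤ m * m * (ok S).card +
            (4 * (m * d)) * (2 * (ok S₂).card) := by
          calc m * m * (ok S₂).card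
              ≤ m * m * ((ok S).card + ∑ s ∈ S₁,
                ((ok S₂).filter fun f => f s.1 = s.2.2 ∧ f s.2.1 = s.2.2).card) := by
                exact Nat.mul_le_mul_left _ hcard1
            _ = m * m * (ok S).card + ∑ s ∈ S₁,
                m * m * ((ok S₂).filter fun f => f s.1 = s.2.2 ∧ f s.2.1 = s.2.2).card := by
                rw [Nat.mul_add, Finset.mul_sum]
            _ ≤ m * m * (ok S).card + ∑ _s ∈ S₁, 2 * (ok S₂).card := by
                exact Nat.add_le_add_left (Finset.sum_le_sum hIH) _
            _ = m * m * (ok S).card + S₁.card * (2 * (ok S₂).card) := by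
                rw [Finset.sum_const, smul_eq_mul]
            _ ≤ m * m * (ok S).card + (4 * (m * d)) * (2 * (ok S₂).card) := by
                gcongr
        -- from step and 16 m d ≤ m², conclude (ok S₂).card ≤ 2 (ok S).card
        have e1 : 2*(m*m*(ok S₂).card) ≤ 2*(m*m*(ok S).card) + 16*(m*d)*(ok S₂).card := by
          calc 2*(m*m*(ok S₂).card)
              ≤ 2*(m*m*(ok S).card + (4*(m*d))*(2*(ok S₂).card)) := Nat.mul_le_mul_left _ step
            _ = 2*(m*m*(ok S).card) + 16*(m*d)*(ok S₂).card := by ring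
        have e2 : 16*(m*d)*(ok S₂).card ≤ m*m*(ok S₂).card := Nat.mul_le_mul_right _ hm
        have e4 : m*m*(ok S₂).card + m*m*(ok S₂).card ≤
            2*(m*m*(ok S).card) + m*m*(ok S₂).card := by
          have e5 := e1.trans (Nat.add_le_add_left e2 _)
          rwa [two_mul (m*m*(ok S₂).card)] at e5
        have e3 : m*m*(ok S₂).card ≤ m*m*(2*(ok S).card) :=
          (Nat.add_le_add_iff_right.mp e4).trans_eq (by ring)
        exact Nat.le_of_mul_le_mul_left e3 (Nat.mul_pos hm0 hm0)
    calc m * m * ((ok S).filter fun f => f u = i ∧ f w = i).card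
        ≤ m * m * ((ok S₂).filter fun f => f u = i ∧ f w = i).card := by
          exact Nat.mul_le_mul_left _ (Finset.card_le_card hB)
      _ = (ok S₂).card := hA.symm
      _ ≤ 2 * (ok S).card := hC

lemma ok_nonempty (G : Fin m → SimpleGraph V) (hdeg : ∀ i, maxDeg (G i) ≤ d)
    (hm : 16 * (m * d) ≤ m * m) (hm2 : 2 < m * m) :
    ∀ S ⊆ trips G, (ok S : Finset (V → Fin m)).Nonempty := by
  classical
  have hm0 : 0 < m := by
    rcases Nat.eq_zero_or_pos m with rfl | h
    · simp at hm2
    · exact h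
  intro S
  induction S using Finset.induction_on with
  | empty =>
    intro _
    refine ⟨fun _ => ⟨0, hm0⟩, ?_⟩
    rw [mem_ok]
    intro t ht
    simp at ht
  | @insert t S hni ih =>
    intro hsub
    have hS : S ⊆ trips G := (Finset.subset_insert _ _).trans hsub
    have ht : t ∈ trips G := hsub (Finset.mem_insert_self _ _)
    have hokS : (ok S : Finset (V → Fin m)).Nonempty := ih hS
    by_contra hempty
    rw [Finset.not_nonempty_iff_eq_empty] at hempty
    have hcover : ok S ⊆ ok (insert t S) ∪
        ((ok S).filter fun f => f t.1 = t.2.2 ∧ f t.2.1 = t.2.2) := by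
      intro f hf
      by_cases hbad : f t.1 = t.2.2 ∧ f t.2.1 = t.2.2
      · exact Finset.mem_union_right _ (Finset.mem_filter.mpr ⟨hf, hbad⟩)
      · refine Finset.mem_union_left _ ?_
        rw [mem_ok] at hf ⊢
        intro s hs
        rcases Finset.mem_insert.mp hs with rfl | hsS
        · exact hbad
        · exact hf s hsS
    have hcard : (ok S).card ≤
        ((ok S).filter fun f => f t.1 = t.2.2 ∧ f t.2.1 = t.2.2).card := by
      calc (ok S).card ≤ _ := Finset.card_le_card hcover
        _ ≤ (ok (insert t S)).card +
            ((ok S).filter fun f => f t.1 = t.2.2 ∧ f t.2.1 = t.2.2).card :=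
            Finset.card_union_le _ _
        _ = _ := by rw [hempty]; simp
    have hmain := main G hdeg hm S.card S hS le_rfl t ht
    have h1 : m * m * (ok S).card ≤ 2 * (ok S).card :=
      le_trans (Nat.mul_le_mul_left _ hcard) hmain
    have h2 : 0 < (ok S).card := Finset.card_pos.mpr hokS
    exact absurd h1 (not_le.mpr ((Nat.mul_lt_mul_right h2).mpr hm2))

lemma coop_of_bound (G : Fin m → SimpleGraph V) (hdeg : ∀ i, maxDeg (G i) ≤ d)
    (hm : 16 * (m * d) ≤ m * m) (hm2 : 2 < m * m) : HasCoopColoring G := by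
  obtain ⟨f, hf⟩ := ok_nonempty G hdeg hm hm2 (trips G) (subset_refl _)
  refine ⟨fun j => {v | f v = j}, fun j u hu v hv hadj => ?_, ?_⟩
  · have hmem : (u, v, j) ∈ trips G := by
      rw [trips, Finset.mem_filter]
      exact ⟨Finset.mem_univ _, hadj⟩
    exact (mem_ok.mp hf _ hmem) ⟨hu, hv⟩
  · rw [Set.eq_univ_iff_forall]
    intro v
    exact Set.mem_iUnion.mpr ⟨f v, rfl⟩

/-- `16 d` graphs always suffice (a crude Lovász-local-lemma-style counting bound). -/
lemma upper (d : ℕ) (hd : 2 ≤ d) : BipartiteColorable d (16 * d) := by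
  intro V _ G _ hdeg
  have hm : 16 * ((16 * d) * d) ≤ (16 * d) * (16 * d) := Nat.le_of_eq (by ring)
  have hm2 : 2 < (16 * d) * (16 * d) := by nlinarith
  exact coop_of_bound G hdeg hm hm2

/-- Cooperative colorability is monotone in the number of graphs. -/
lemma colorable_mono {d k M : ℕ} (h : k ≤ M) (hc : BipartiteColorable d k) :
    BipartiteColorable d M := by
  intro V _ G hbip hdeg
  obtain ⟨I, hind, hcov⟩ := hc V (fun j => G (Fin.castLE h j))
    (fun j => hbip _) (fun j => hdeg _)
  refine ⟨fun j => if h' : (j : ℕ) < k then I ⟨j, h'⟩ else ∅, ?_, ?_⟩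
  · intro j
    by_cases h' : (j : ℕ) < k
    · simp only [dif_pos h']
      have e : Fin.castLE h ⟨(j : ℕ), h'⟩ = j := by ext; rfl
      simpa [e] using hind ⟨(j : ℕ), h'⟩
    · simp only [dif_neg h']
      intro u hu
      exact absurd hu (Set.notMem_empty u)
  · rw [Set.eq_univ_iff_forall]
    intro v
    have : v ∈ ⋃ j, I j := hcov ▸ Set.mem_univ v
    obtain ⟨i, hi⟩ := Set.mem_iUnion.mp this
    refine Set.mem_iUnion.mpr ⟨Fin.castLE h i, ?_⟩
    have h' : ((Fin.castLE h i : Fin M) : ℕ) < k := i.2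
    simp only [dif_pos h']
    have : (⟨((Fin.castLE h i : Fin M) : ℕ), h'⟩ : Fin k) = i := by ext; rfl
    rw [this]
    exact hi

end CoopAux

/-! ### The lower bound construction -/

namespace CoopLow

/-- The `i`-th binary digit of a vertex of `Fin (2 ^ m)`. -/
noncomputable def bfun {m : ℕ} : Fin (2 ^ m) → (Fin m → Fin 2) :=
  finFunctionFinEquiv.symm

lemma bfun_inj {m : ℕ} : Function.Injective (bfun (m := m)) :=
  finFunctionFinEquiv.symm.injective

/-- The `i`-th graph: two vertices are adjacent iff their `i`-th digits differ. -/
noncomputable def Gr (m : ℕ) (i : Fin m) : SimpleGraph (Fin (2 ^ m)) where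
  Adj u v := bfun u i ≠ bfun v i
  symm := ⟨fun u v h => Ne.symm h⟩
  loopless := ⟨fun v h => h rfl⟩

lemma fin2_aux : ∀ x y : Fin 2, x ≠ y → (x = 0 ↔ ¬ y = 0) := by decide

lemma fin2_aux2 : ∀ x y c : Fin 2, x ≠ c → y ≠ c → x = y := by decide

lemma Gr_bipart (m : ℕ) (i : Fin m) : IsBipart (Gr m i) := by
  refine ⟨{v | bfun v i = 0}, fun u v h => ?_⟩
  exact fin2_aux _ _ h

lemma Gr_maxDeg (m d : ℕ) (hpow : 2 ^ (m - 1) ≤ d) (i : Fin m) :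
    maxDeg (Gr m i) ≤ d := by
  classical
  refine Finset.sup_le fun v _ => ?_
  have hsub : ((Gr m i).neighborSet v).ncard ≤ 2 ^ (m - 1) := by
    have hcard : Fintype.card ({j : Fin m // j ≠ i} → Fin 2) = 2 ^ (m - 1) := by
      simp [Fintype.card_fun, Fintype.card_subtype_compl, Fintype.card_subtype_eq]
    calc ((Gr m i).neighborSet v).ncard
        ≤ (Set.univ : Set ({j : Fin m // j ≠ i} → Fin 2)).ncard := by
          refine Set.ncard_le_ncard_of_injOn (fun u j => bfun u j.1)
            (fun u _ => Set.mem_univ _) ?_ Set.finite_univ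
          intro u₁ hu₁ u₂ hu₂ heq
          have h₁ : bfun u₁ i ≠ bfun v i := Ne.symm hu₁
          have h₂ : bfun u₂ i ≠ bfun v i := Ne.symm hu₂
          apply bfun_inj
          funext j
          rcases eq_or_ne j i with rfl | hj
          · exact fin2_aux2 _ _ _ h₁ h₂
          · exact congrFun heq ⟨j, hj⟩
      _ = 2 ^ (m - 1) := by rw [Set.ncard_univ, Nat.card_eq_fintype_card, hcard]
  exact hsub.trans hpow

/-- The binary-digit "other value". -/
def other : Fin 2 → Fin 2 := fun x => if x = 0 then 1 else 0

lemma other_ne : ∀ x : Fin 2, other x ≠ x := by decide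

lemma Gr_no_coop (m : ℕ) : ¬ HasCoopColoring (Gr m) := by
  rintro ⟨I, hind, hcov⟩
  classical
  set c : Fin m → Fin 2 :=
    fun i => if h : (I i).Nonempty then bfun h.choose i else 0 with hc
  set v : Fin (2 ^ m) := finFunctionFinEquiv (fun i => other (c i)) with hv
  have hbv : bfun v = fun i => other (c i) := by
    rw [hv, bfun, Equiv.symm_apply_apply]
  have : v ∈ ⋃ j, I j := hcov ▸ Set.mem_univ v
  obtain ⟨i, hvi⟩ := Set.mem_iUnion.mp this
  have hne : (I i).Nonempty := ⟨v, hvi⟩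
  have hci : c i = bfun hne.choose i := by rw [hc]; simp [dif_pos hne]
  have hmem : hne.choose ∈ I i := hne.choose_spec
  have hnadj : ¬ (Gr m i).Adj hne.choose v := hind i hmem hvi
  have heq : bfun hne.choose i = bfun v i := not_not.mp hnadj
  rw [hbv] at heq
  simp only at heq
  exact other_ne (c i) (by rw [← hci] at heq; exact heq.symm)

end CoopLow

/-- For every `d ≥ 2` there are `⌈log₂ d⌉` bipartite graphs on a common finite
vertex set, each of maximum degree at most `d`, with no cooperative coloring;
consequently `m_B(d) > log₂ d`. -/
theorem bipartite_lower_bound (d : ℕ) (hd : 2 ≤ d) :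
    (∃ (n : ℕ) (G : Fin ⌈Real.logb 2 d⌉₊ → SimpleGraph (Fin n)),
      (∀ i, IsBipart (G i)) ∧ (∀ i, maxDeg (G i) ≤ d) ∧ ¬ HasCoopColoring G) ∧
    Real.logb 2 d < (mB d : ℝ) := by
  have hkey : ⌈Real.logb 2 d⌉₊ = Nat.clog 2 d := by
    rw [show ((2:ℝ)) = ((2:ℕ):ℝ) by norm_num, ← Int.ceil_toNat,
      Real.ceil_logb_natCast (by positivity), Int.clog_natCast, Int.toNat_natCast]
  have hpow : 2 ^ (⌈Real.logb 2 d⌉₊ - 1) ≤ d := by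
    rw [hkey]
    exact (Nat.pow_pred_clog_lt_self one_lt_two (by omega)).le
  have hbip := CoopLow.Gr_bipart ⌈Real.logb 2 d⌉₊
  have hdeg := CoopLow.Gr_maxDeg ⌈Real.logb 2 d⌉₊ d hpow
  have hnc := CoopLow.Gr_no_coop ⌈Real.logb 2 d⌉₊
  refine ⟨⟨2 ^ ⌈Real.logb 2 d⌉₊, CoopLow.Gr _, hbip, hdeg, hnc⟩, ?_⟩
  have hnotcol : ¬ BipartiteColorable d ⌈Real.logb 2 d⌉₊ := by
    intro h
    exact hnc (h (Fin (2 ^ ⌈Real.logb 2 d⌉₊)) (CoopLow.Gr _) hbip hdeg)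
  have hub : BipartiteColorable d (16 * d) := CoopAux.upper d hd
  have hSne : {m | BipartiteColorable d m}.Nonempty := ⟨16 * d, hub⟩
  have hmem : BipartiteColorable d (mB d) := Nat.sInf_mem hSne
  have hlt : ⌈Real.logb 2 d⌉₊ < mB d := by
    by_contra h
    push_neg at h
    exact hnotcol (CoopAux.colorable_mono h hmem)
  calc Real.logb 2 d ≤ (⌈Real.logb 2 d⌉₊ : ℝ) := Nat.le_ceil _
    _ < (mB d : ℝ) := by exact_mod_cast hlt
end

section
/- Let A be a finite set, m ≥ 1 an integer, and for each a ∈ A let J(a) be a nonempty subset of {1,…,m}. Let (j(a))_{a∈A} be independent random variables, with j(a) uniformly distributed on J(a). For each j ∈ {1,…,m}, fix a subset N_j ⊆ A and let E^j be the event that j(a) = j for some a ∈ N_j. Then the events E^1, …, E^m are negatively correlated: for every subset S ⊆ {1,…,m}, P(⋂_{j∈S} E^j) ≤ ∏_{j∈S} P(E^j). -/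
/-- The sample space: an independent choice, for each `a : A`, of an index
`j(a)` in the finite set `J a`. -/
def ChoiceSpace {A : Type*} {m : ℕ} (J : A → Finset (Fin m)) : Type _ :=
  ∀ a : A, {x : Fin m // x ∈ J a}

/-- The probability of an event under the uniform distribution on
`ChoiceSpace J`, which is exactly the product distribution in which each
`j(a)` is chosen independently and uniformly from `J a`. -/
noncomputable def uniformProb {A : Type*} [Fintype A] {m : ℕ}
    (J : A → Finset (Fin m)) (E : Set (ChoiceSpace J)) : ℝ :=
  (Nat.card E : ℝ) / (Nat.card (ChoiceSpace J) : ℝ)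

/-- The event `E^j` that `j(a) = j` for some `a ∈ N j`. -/
def hitEvent {A : Type*} {m : ℕ} (J : A → Finset (Fin m)) (N : Fin m → Set A)
    (j : Fin m) : Set (ChoiceSpace J) :=
  {ω | ∃ a ∈ N j, (ω a : Fin m) = j}

section Helpers

variable {A : Type*} [Fintype A] {m : ℕ} {J : A → Finset (Fin m)}

instance instFiniteCS : Finite (ChoiceSpace J) := by
  unfold ChoiceSpace; infer_instance

lemma cardCS_pos (hJ : ∀ a, (J a).Nonempty) : 0 < Nat.card (ChoiceSpace J) := by
  have : Nonempty (ChoiceSpace J) := ⟨fun a => ⟨(hJ a).choose, (hJ a).choose_spec⟩⟩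
  exact Nat.card_pos

lemma uP_nonneg (E : Set (ChoiceSpace J)) : 0 ≤ uniformProb J E :=
  div_nonneg (by positivity) (by positivity)

lemma uP_mono (hJ : ∀ a, (J a).Nonempty) {E F : Set (ChoiceSpace J)} (h : E ⊆ F) :
    uniformProb J E ≤ uniformProb J F := by
  have hΩ : (0:ℝ) < (Nat.card (ChoiceSpace J) : ℝ) := by exact_mod_cast cardCS_pos hJ
  have hc : (Nat.card E : ℝ) ≤ (Nat.card F : ℝ) := by
    exact_mod_cast Nat.card_mono (Set.toFinite F) h
  exact div_le_div_of_nonneg_right hc hΩ.le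

lemma uP_le_one (hJ : ∀ a, (J a).Nonempty) (E : Set (ChoiceSpace J)) :
    uniformProb J E ≤ 1 := by
  have hΩ : (0:ℝ) < (Nat.card (ChoiceSpace J) : ℝ) := by exact_mod_cast cardCS_pos hJ
  rw [uniformProb, div_le_one hΩ]
  exact_mod_cast Nat.card_le_card_of_injective _ Subtype.val_injective

lemma uP_univ (hJ : ∀ a, (J a).Nonempty) :
    uniformProb J (Set.univ : Set (ChoiceSpace J)) = 1 := by
  have hΩ : (0:ℝ) < (Nat.card (ChoiceSpace J) : ℝ) := by exact_mod_cast cardCS_pos hJ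
  rw [uniformProb, Nat.card_congr (Equiv.Set.univ _), div_self hΩ.ne']

lemma uP_empty : uniformProb J (∅ : Set (ChoiceSpace J)) = 0 := by
  rw [uniformProb, Nat.card_of_isEmpty]
  simp

lemma card_inter_slice [DecidableEq A] (a0 : A) {E : Set (ChoiceSpace J)}
    (hE : ∀ (ω : ChoiceSpace J) (x : {y : Fin m // y ∈ J a0}), ω ∈ E →
      (Function.update ω a0 x : ChoiceSpace J) ∈ E)
    {v : Fin m} (hv : v ∈ J a0) :
    Nat.card (↥(E ∩ {ω : ChoiceSpace J | (ω a0 : Fin m) = v})) * (J a0).card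
      = Nat.card ↥E := by
  have e : ↥(E ∩ {ω : ChoiceSpace J | (ω a0 : Fin m) = v}) × {y : Fin m // y ∈ J a0} ≃ ↥E :=
    { toFun := fun p => ⟨Function.update p.1.1 a0 p.2, hE _ _ p.1.2.1⟩
      invFun := fun ω => ⟨⟨Function.update ω.1 a0 ⟨v, hv⟩, hE _ _ ω.2, by
        exact congrArg Subtype.val (Function.update_self (f := (ω.1 : ∀ a, {x : Fin m // x ∈ J a}))
          (a := a0) (v := ⟨v, hv⟩))⟩, ω.1 a0⟩
      left_inv := by
        rintro ⟨⟨ω, hωE, hωs⟩, x⟩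
        have hω0 : ω a0 = ⟨v, hv⟩ := Subtype.ext hωs
        ext
        · simp only
          erw [Function.update_idem, ← hω0, Function.update_eq_self]
        · exact congrArg (fun y : {x : Fin m // x ∈ J a0} => ((y : Fin m) : ℕ))
            (Function.update_self (f := (ω : ∀ a, {x : Fin m // x ∈ J a})) (a := a0) (v := x))
      right_inv := by
        rintro ⟨ω, hω⟩
        apply Subtype.ext
        simp only
        erw [Function.update_idem, Function.update_eq_self] }
  rw [← Nat.card_congr e, Nat.card_prod, Nat.card_eq_fintype_card (α := {y : Fin m // y ∈ J a0}),
    Fintype.card_coe]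

lemma uP_inter_slice [DecidableEq A] (hJ : ∀ a, (J a).Nonempty) (a0 : A)
    {E : Set (ChoiceSpace J)}
    (hE : ∀ (ω : ChoiceSpace J) (x : {y : Fin m // y ∈ J a0}), ω ∈ E →
      (Function.update ω a0 x : ChoiceSpace J) ∈ E)
    {v : Fin m} (hv : v ∈ J a0) :
    uniformProb J (E ∩ {ω : ChoiceSpace J | (ω a0 : Fin m) = v})
      = uniformProb J E / (J a0).card := by
  have h := card_inter_slice a0 hE hv
  have hn : (0:ℝ) < ((J a0).card : ℝ) := by exact_mod_cast Finset.card_pos.mpr ⟨v, hv⟩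
  have hΩ : (0:ℝ) < (Nat.card (ChoiceSpace J) : ℝ) := by exact_mod_cast cardCS_pos hJ
  have hcast : (Nat.card (↥(E ∩ {ω : ChoiceSpace J | (ω a0 : Fin m) = v})) : ℝ) * ((J a0).card : ℝ)
      = (Nat.card ↥E : ℝ) := by exact_mod_cast h
  rw [uniformProb, uniformProb, ← hcast]
  field_simp

lemma uP_partition [DecidableEq A] (a0 : A) (E : Set (ChoiceSpace J)) :
    uniformProb J E
      = ∑ v ∈ J a0, uniformProb J (E ∩ {ω : ChoiceSpace J | (ω a0 : Fin m) = v}) := by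
  classical
  letI : Fintype (ChoiceSpace J) := Fintype.ofFinite _
  unfold uniformProb
  rw [← Finset.sum_div]
  congr 1
  have hcard : ∀ (s : Set (ChoiceSpace J)), (Nat.card ↥s : ℝ) = (s.toFinset.card : ℝ) := by
    intro s
    rw [Nat.card_eq_fintype_card, Set.toFinset_card]
  rw [hcard]
  have := Finset.card_eq_sum_card_fiberwise
    (f := fun ω : ChoiceSpace J => (ω a0 : Fin m)) (s := E.toFinset) (t := J a0)
    (fun ω _ => (ω a0).2)
  rw [this]
  push_cast
  refine Finset.sum_congr rfl fun v hv => ?_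
  rw [hcard]
  norm_cast
  congr 1
  ext ω
  simp [Set.mem_toFinset]

end Helpers

section Part2

variable {A : Type*} [Fintype A] {m : ℕ} {J : A → Finset (Fin m)}

set_option linter.unusedSectionVars false

lemma hit_update [DecidableEq A] {a0 : A} {N : Fin m → Set A} {j : Fin m}
    (hj : a0 ∉ N j) (ω : ChoiceSpace J) (x : {y : Fin m // y ∈ J a0})
    (hω : ω ∈ hitEvent J N j) : (Function.update ω a0 x : ChoiceSpace J) ∈ hitEvent J N j := by
  obtain ⟨a, haN, ha⟩ := hω
  have hne : a ≠ a0 := fun h => hj (h ▸ haN)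
  exact ⟨a, haN, by erw [Function.update_of_ne hne]; exact ha⟩

lemma iInter_update [DecidableEq A] {a0 : A} {N : Fin m → Set A}
    (hN : ∀ j, a0 ∉ N j) (S : Finset (Fin m)) (ω : ChoiceSpace J)
    (x : {y : Fin m // y ∈ J a0}) (hω : ω ∈ ⋂ j ∈ S, hitEvent J N j) :
    (Function.update ω a0 x : ChoiceSpace J) ∈ ⋂ j ∈ S, hitEvent J N j := by
  rw [Set.mem_iInter₂] at hω
  refine Set.mem_iInter₂.mpr ?_
  exact fun j hj => hit_update (hN j) ω x (hω j hj)

lemma hit_mono {N N' : Fin m → Set A} (h : ∀ j, N' j ⊆ N j) (j : Fin m) :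
    hitEvent J N' j ⊆ hitEvent J N j := by
  rintro ω ⟨a, haN, ha⟩
  exact ⟨a, h j haN, ha⟩

/-- Slice where the special value is picked up by some event in `S`. -/
lemma inter_slice_eq₁ (a0 : A) (N : Fin m → Set A) (S : Finset (Fin m))
    {x : Fin m} (hxS : x ∈ S) (hxN : a0 ∈ N x) :
    (⋂ j ∈ S, hitEvent J N j) ∩ {ω : ChoiceSpace J | (ω a0 : Fin m) = x}
      = (⋂ j ∈ S.erase x, hitEvent J (fun j => N j \ {a0}) j)
          ∩ {ω : ChoiceSpace J | (ω a0 : Fin m) = x} := by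
  ext ω
  simp only [Set.mem_inter_iff, Set.mem_iInter, Set.mem_setOf_eq, hitEvent,
    Finset.mem_erase, Set.mem_diff, Set.mem_singleton_iff]
  constructor
  · rintro ⟨h, hω⟩
    refine ⟨fun j hj => ?_, hω⟩
    obtain ⟨a, haN, ha⟩ := h j hj.2
    have hne : a ≠ a0 := by
      rintro rfl
      exact hj.1 (by rw [← ha, hω])
    exact ⟨a, ⟨haN, hne⟩, ha⟩
  · rintro ⟨h, hω⟩
    refine ⟨fun j hj => ?_, hω⟩
    by_cases hjx : j = x
    · exact ⟨a0, hjx ▸ hxN, by rw [hω, hjx]⟩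
    · obtain ⟨a, haN, ha⟩ := h j ⟨hjx, hj⟩
      exact ⟨a, haN.1, ha⟩

/-- Slice where the special value is not picked up by any event in `S`. -/
lemma inter_slice_eq₂ (a0 : A) (N : Fin m → Set A) (S : Finset (Fin m))
    {x : Fin m} (hx : ¬(x ∈ S ∧ a0 ∈ N x)) :
    (⋂ j ∈ S, hitEvent J N j) ∩ {ω : ChoiceSpace J | (ω a0 : Fin m) = x}
      = (⋂ j ∈ S, hitEvent J (fun j => N j \ {a0}) j)
          ∩ {ω : ChoiceSpace J | (ω a0 : Fin m) = x} := by
  ext ω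
  simp only [Set.mem_inter_iff, Set.mem_iInter, Set.mem_setOf_eq, hitEvent,
    Set.mem_diff, Set.mem_singleton_iff]
  constructor
  · rintro ⟨h, hω⟩
    refine ⟨fun j hj => ?_, hω⟩
    obtain ⟨a, haN, ha⟩ := h j hj
    have hne : a ≠ a0 := by
      rintro rfl
      rw [hω] at ha
      exact hx ⟨ha ▸ hj, ha ▸ haN⟩
    exact ⟨a, ⟨haN, hne⟩, ha⟩
  · rintro ⟨h, hω⟩
    refine ⟨fun j hj => ?_, hω⟩
    obtain ⟨a, haN, ha⟩ := h j hj
    exact ⟨a, haN.1, ha⟩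

lemma prod_add_bound {α : Type*} [DecidableEq α] (q ε : α → ℝ)
    (hq : ∀ j, 0 ≤ q j) (hε : ∀ j, 0 ≤ ε j) :
    ∀ (T S : Finset α), T ⊆ S →
      (∏ j ∈ S, q j) + ∑ v ∈ T, ε v * ∏ j ∈ S.erase v, q j
        ≤ (∏ j ∈ S \ T, q j) * ∏ v ∈ T, (q v + ε v) := by
  intro T
  induction T using Finset.induction_on with
  | empty => intro S _; simp
  | @insert v T' hv ih =>
    intro S hTS
    have hvS : v ∈ S := hTS (Finset.mem_insert_self _ _)
    have hT'S : T' ⊆ S.erase v := fun u hu =>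
      Finset.mem_erase.mpr ⟨fun h => hv (h ▸ hu), hTS (Finset.mem_insert_of_mem hu)⟩
    have ih' := ih (S.erase v) hT'S
    have hsd : S \ insert v T' = (S.erase v) \ T' := by
      ext u
      simp only [Finset.mem_sdiff, Finset.mem_insert, Finset.mem_erase, not_or]
      tauto
    have hnn : 0 ≤ q v + ε v := add_nonneg (hq v) (hε v)
    rw [Finset.sum_insert hv, Finset.prod_insert hv, hsd]
    have step1 : (q v + ε v) * ((∏ j ∈ S.erase v, q j)
          + ∑ u ∈ T', ε u * ∏ j ∈ (S.erase v).erase u, q j)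
        ≤ (∏ j ∈ (S.erase v) \ T', q j) * ((q v + ε v) * ∏ u ∈ T', (q u + ε u)) := by
      calc (q v + ε v) * ((∏ j ∈ S.erase v, q j)
            + ∑ u ∈ T', ε u * ∏ j ∈ (S.erase v).erase u, q j)
          ≤ (q v + ε v) * ((∏ j ∈ (S.erase v) \ T', q j) * ∏ u ∈ T', (q u + ε u)) :=
            mul_le_mul_of_nonneg_left ih' hnn
        _ = (∏ j ∈ (S.erase v) \ T', q j) * ((q v + ε v) * ∏ u ∈ T', (q u + ε u)) := by ring
    refine le_trans ?_ step1
    have hprodS : q v * ∏ j ∈ S.erase v, q j = ∏ j ∈ S, q j := Finset.mul_prod_erase S q hvS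
    have hterm : ∀ u ∈ T', ε u * ∏ j ∈ S.erase u, q j
        ≤ (q v + ε v) * (ε u * ∏ j ∈ (S.erase v).erase u, q j) := by
      intro u hu
      have huv : u ≠ v := fun h => hv (h ▸ hu)
      have hvSu : v ∈ S.erase u := Finset.mem_erase.mpr ⟨fun h => huv h.symm, hvS⟩
      have hcomm : (S.erase v).erase u = (S.erase u).erase v := Finset.erase_right_comm
      rw [hcomm]
      have : ∏ j ∈ S.erase u, q j = q v * ∏ j ∈ (S.erase u).erase v, q j :=
        (Finset.mul_prod_erase (S.erase u) q hvSu).symm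
      rw [this]
      have h1 : ε u * (q v * ∏ j ∈ (S.erase u).erase v, q j)
          = q v * (ε u * ∏ j ∈ (S.erase u).erase v, q j) := by ring
      rw [h1]
      apply mul_le_mul_of_nonneg_right (by linarith [hε v])
      exact mul_nonneg (hε u) (Finset.prod_nonneg fun j _ => hq j)
    have hsum := Finset.sum_le_sum hterm
    refine le_trans ?_ (le_refl _)
    have hmul : ∑ i ∈ T', (q v + ε v) * (ε i * ∏ j ∈ (S.erase v).erase i, q j)
        = (q v + ε v) * ∑ i ∈ T', ε i * ∏ j ∈ (S.erase v).erase i, q j :=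
      (Finset.mul_sum _ _ _).symm
    have hexp : (q v + ε v) * ((∏ j ∈ S.erase v, q j)
          + ∑ u ∈ T', ε u * ∏ j ∈ (S.erase v).erase u, q j)
        = q v * (∏ j ∈ S.erase v, q j) + ε v * (∏ j ∈ S.erase v, q j)
          + (q v + ε v) * ∑ u ∈ T', ε u * ∏ j ∈ (S.erase v).erase u, q j := by ring
    linarith [hsum, hmul, hexp, hprodS]

end Part2

section Main

variable {A : Type*} [Fintype A] {m : ℕ} {J : A → Finset (Fin m)}

set_option maxHeartbeats 1000000 in
lemma main_lemma [DecidableEq A] (hJ : ∀ a, (J a).Nonempty) (B : Finset A) :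
    ∀ (N : Fin m → Set A) (S : Finset (Fin m)), (∀ j ∈ S, N j ⊆ ↑B) →
      uniformProb J (⋂ j ∈ S, hitEvent J N j) ≤ ∏ j ∈ S, uniformProb J (hitEvent J N j) := by
  classical
  induction B using Finset.induction_on with
  | empty =>
    intro N S hNS
    rcases S.eq_empty_or_nonempty with rfl | ⟨j0, hj0⟩
    · simp [uP_univ hJ]
    · have hN : N j0 = ∅ := by
        have := hNS j0 hj0
        simpa [Set.subset_empty_iff] using this
      have hsub : (⋂ j ∈ S, hitEvent J N j) = (∅ : Set (ChoiceSpace J)) := by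
        apply Set.subset_empty_iff.mp
        intro ω hω
        obtain ⟨a, ha, -⟩ := Set.mem_iInter₂.mp hω j0 hj0
        rw [hN] at ha
        exact ha
      rw [hsub, uP_empty]
      exact Finset.prod_nonneg fun j _ => uP_nonneg _
  | @insert a0 B ha0 ih =>
    intro N S hNS
    set N' : Fin m → Set A := fun j => N j \ {a0} with hN'def
    have hN'a0 : ∀ j, a0 ∉ N' j := fun j h => h.2 rfl
    have hN'B : ∀ (S' : Finset (Fin m)), S' ⊆ S → ∀ j ∈ S', N' j ⊆ ↑B := by
      intro S' hS' j hj x hx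
      have hxB := hNS j (hS' hj) hx.1
      rw [Finset.coe_insert] at hxB
      rcases Set.mem_insert_iff.mp hxB with h | h
      · exact absurd h hx.2
      · exact h
    have hn0 : 0 < (J a0).card := Finset.card_pos.mpr (hJ a0)
    have hn : (0:ℝ) < ((J a0).card : ℝ) := by exact_mod_cast hn0
    set q : Fin m → ℝ := fun j => uniformProb J (hitEvent J N' j) with hqdef
    set e : Fin m → ℝ := fun j => uniformProb J (hitEvent J N j) with hedef
    set ε : Fin m → ℝ := fun j => (1 - q j) / ((J a0).card : ℝ) with hεdef
    have hq0 : ∀ j, 0 ≤ q j := fun j => uP_nonneg _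
    have hq1 : ∀ j, q j ≤ 1 := fun j => uP_le_one hJ _
    have he0 : ∀ j, 0 ≤ e j := fun j => uP_nonneg _
    have hN'N : ∀ j, N' j ⊆ N j := fun j => Set.diff_subset
    have hqe : ∀ j, q j ≤ e j := fun j => uP_mono hJ (hit_mono hN'N j)
    have hε0 : ∀ j, 0 ≤ ε j := fun j => div_nonneg (by linarith [hq1 j]) hn.le
    set T : Finset (Fin m) := (J a0).filter (fun v => v ∈ S ∧ a0 ∈ N v) with hTdef
    have hTJ : T ⊆ J a0 := Finset.filter_subset _ _
    have hTS : T ⊆ S := fun v hv => (Finset.mem_filter.mp hv).2.1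
    have hinv : ∀ (S' : Finset (Fin m)) (ω : ChoiceSpace J) (x : {y : Fin m // y ∈ J a0}),
        ω ∈ ⋂ j ∈ S', hitEvent J N' j →
        (Function.update ω a0 x : ChoiceSpace J) ∈ ⋂ j ∈ S', hitEvent J N' j :=
      fun S' => iInter_update hN'a0 S'
    -- Step 1: partition the LHS over slices
    have hLHS : uniformProb J (⋂ j ∈ S, hitEvent J N j)
        = ∑ x ∈ J a0, uniformProb J (⋂ j ∈ (if x ∈ S ∧ a0 ∈ N x then S.erase x else S),
            hitEvent J N' j) / ((J a0).card : ℝ) := by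
      rw [uP_partition a0]
      refine Finset.sum_congr rfl fun x hx => ?_
      by_cases hxc : x ∈ S ∧ a0 ∈ N x
      · rw [if_pos hxc, inter_slice_eq₁ a0 N S hxc.1 hxc.2,
          uP_inter_slice hJ a0 (hinv (S.erase x)) hx]
      · rw [if_neg hxc, inter_slice_eq₂ a0 N S hxc,
          uP_inter_slice hJ a0 (hinv S) hx]
    -- Step 2: bound each summand using the induction hypothesis
    have hbound : ∀ x ∈ J a0,
        uniformProb J (⋂ j ∈ (if x ∈ S ∧ a0 ∈ N x then S.erase x else S),
            hitEvent J N' j) / ((J a0).card : ℝ)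
          ≤ (∏ j ∈ (if x ∈ S ∧ a0 ∈ N x then S.erase x else S), q j) / ((J a0).card : ℝ) := by
      intro x _
      apply div_le_div_of_nonneg_right ?_ hn.le
      by_cases hxc : x ∈ S ∧ a0 ∈ N x
      · rw [if_pos hxc]
        exact ih N' (S.erase x) (hN'B _ (Finset.erase_subset _ _))
      · rw [if_neg hxc]
        exact ih N' S (hN'B S (Finset.Subset.refl S))
    -- Step 3: split the sum according to membership in T
    have hsplit : ∑ x ∈ J a0, (∏ j ∈ (if x ∈ S ∧ a0 ∈ N x then S.erase x else S), q j)
          / ((J a0).card : ℝ)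
        = (∑ x ∈ T, (∏ j ∈ S.erase x, q j) / ((J a0).card : ℝ))
          + (((J a0).card - T.card : ℕ) : ℝ) * ((∏ j ∈ S, q j) / ((J a0).card : ℝ)) := by
      rw [← Finset.sum_filter_add_sum_filter_not (J a0) (fun v => v ∈ S ∧ a0 ∈ N v)]
      congr 1
      · refine Finset.sum_congr rfl fun x hx => ?_
        rw [if_pos (Finset.mem_filter.mp hx).2]
      · rw [Finset.sum_congr rfl (fun x hx => by
          rw [if_neg (Finset.mem_filter.mp hx).2])]
        rw [Finset.sum_const, nsmul_eq_mul]
        congr 2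
        rw [Finset.filter_not, Finset.card_sdiff_of_subset (Finset.filter_subset _ _)]
    -- Step 4: combine
    have hper : ∀ v ∈ T, (∏ j ∈ S.erase v, q j) / ((J a0).card : ℝ)
        = (∏ j ∈ S, q j) / ((J a0).card : ℝ) + ε v * ∏ j ∈ S.erase v, q j := by
      intro v hv
      have hvS : v ∈ S := hTS hv
      have hps : ∏ j ∈ S, q j = q v * ∏ j ∈ S.erase v, q j :=
        (Finset.mul_prod_erase S q hvS).symm
      rw [hps]
      simp only [hεdef]
      field_simp
      ring
    have hcomb : (∑ x ∈ T, (∏ j ∈ S.erase x, q j) / ((J a0).card : ℝ))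
          + (((J a0).card - T.card : ℕ) : ℝ) * ((∏ j ∈ S, q j) / ((J a0).card : ℝ))
        ≤ (∏ j ∈ S, q j) + ∑ v ∈ T, ε v * ∏ j ∈ S.erase v, q j := by
      rw [Finset.sum_congr rfl hper, Finset.sum_add_distrib, Finset.sum_const, nsmul_eq_mul]
      have hTcard : T.card ≤ (J a0).card := Finset.card_le_card hTJ
      have hc : (((J a0).card - T.card : ℕ) : ℝ) = ((J a0).card : ℝ) - (T.card : ℝ) :=
        Nat.cast_sub hTcard
      rw [hc]
      have hval : (T.card : ℝ) * ((∏ j ∈ S, q j) / ((J a0).card : ℝ))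
          + (((J a0).card : ℝ) - (T.card : ℝ)) * ((∏ j ∈ S, q j) / ((J a0).card : ℝ))
          = ∏ j ∈ S, q j := by
        field_simp
        ring
      linarith [hval]
    -- Step 5: the elementary inequality
    have harith := prod_add_bound q ε hq0 hε0 T S hTS
    -- Step 6: lower bounds for the factors of the RHS
    have heT : ∀ v ∈ T, q v + ε v ≤ e v := by
      intro v hv
      have hvJ : v ∈ J a0 := hTJ hv
      have hvmem := Finset.mem_filter.mp hv
      have hvS : v ∈ S := hvmem.2.1
      have hvN : a0 ∈ N v := hvmem.2.2
      have h1 : uniformProb J (hitEvent J N v ∩ {ω : ChoiceSpace J | (ω a0 : Fin m) = v})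
          = 1 / ((J a0).card : ℝ) := by
        have hslice : hitEvent J N v ∩ {ω : ChoiceSpace J | (ω a0 : Fin m) = v}
            = (Set.univ : Set (ChoiceSpace J)) ∩ {ω : ChoiceSpace J | (ω a0 : Fin m) = v} := by
          rw [Set.univ_inter]
          apply Set.inter_eq_self_of_subset_right
          intro ω hω
          exact ⟨a0, hvN, hω⟩
        rw [hslice]
        refine (uP_inter_slice hJ a0 (E := Set.univ) (fun ω x _ => Set.mem_univ _) hvJ).trans ?_
        rw [uP_univ hJ]
      have h2 : ∀ x ∈ (J a0).erase v,
          q v / ((J a0).card : ℝ)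
            ≤ uniformProb J (hitEvent J N v ∩ {ω : ChoiceSpace J | (ω a0 : Fin m) = x}) := by
        intro x hx
        have hxJ : x ∈ J a0 := Finset.mem_of_mem_erase hx
        have hqv : uniformProb J (hitEvent J N' v ∩ {ω : ChoiceSpace J | (ω a0 : Fin m) = x})
            = q v / ((J a0).card : ℝ) :=
          uP_inter_slice hJ a0 (fun ω y h => hit_update (hN'a0 v) ω y h) hxJ
        rw [← hqv]
        exact uP_mono hJ (Set.inter_subset_inter_left _ (hit_mono hN'N v))
      have key : e v = 1 / ((J a0).card : ℝ)
          + ∑ x ∈ (J a0).erase v,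
              uniformProb J (hitEvent J N v ∩ {ω : ChoiceSpace J | (ω a0 : Fin m) = x}) := by
        rw [hedef]
        simp only
        rw [uP_partition a0 (hitEvent J N v), ← Finset.add_sum_erase (J a0) _ hvJ, h1]
      have hge : 1 / ((J a0).card : ℝ) + ∑ x ∈ (J a0).erase v, q v / ((J a0).card : ℝ)
          ≤ e v := by
        rw [key]
        exact add_le_add_right (Finset.sum_le_sum h2) _
      have hsumconst : ∑ x ∈ (J a0).erase v, q v / ((J a0).card : ℝ)
          = (((J a0).card - 1 : ℕ) : ℝ) * (q v / ((J a0).card : ℝ)) := by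
        rw [Finset.sum_const, nsmul_eq_mul, Finset.card_erase_of_mem hvJ]
      have hεval : q v + ε v = 1 / ((J a0).card : ℝ)
          + (((J a0).card - 1 : ℕ) : ℝ) * (q v / ((J a0).card : ℝ)) := by
        rw [Nat.cast_sub hn0]
        simp only [hεdef]
        field_simp
        ring
      rw [hεval, ← hsumconst]
      exact hge
    have hprodT : ∏ v ∈ T, (q v + ε v) ≤ ∏ v ∈ T, e v :=
      Finset.prod_le_prod (fun v _ => add_nonneg (hq0 v) (hε0 v)) heT
    have hprodST : ∏ j ∈ S \ T, q j ≤ ∏ j ∈ S \ T, e j :=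
      Finset.prod_le_prod (fun j _ => hq0 j) (fun j _ => hqe j)
    calc uniformProb J (⋂ j ∈ S, hitEvent J N j)
        = ∑ x ∈ J a0, uniformProb J (⋂ j ∈ (if x ∈ S ∧ a0 ∈ N x then S.erase x else S),
            hitEvent J N' j) / ((J a0).card : ℝ) := hLHS
      _ ≤ ∑ x ∈ J a0, (∏ j ∈ (if x ∈ S ∧ a0 ∈ N x then S.erase x else S), q j)
            / ((J a0).card : ℝ) := Finset.sum_le_sum hbound
      _ = (∑ x ∈ T, (∏ j ∈ S.erase x, q j) / ((J a0).card : ℝ))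
            + (((J a0).card - T.card : ℕ) : ℝ)
              * ((∏ j ∈ S, q j) / ((J a0).card : ℝ)) := hsplit
      _ ≤ (∏ j ∈ S, q j) + ∑ v ∈ T, ε v * ∏ j ∈ S.erase v, q j := hcomb
      _ ≤ (∏ j ∈ S \ T, q j) * ∏ v ∈ T, (q v + ε v) := harith
      _ ≤ (∏ j ∈ S \ T, e j) * ∏ v ∈ T, e v := by
          apply mul_le_mul hprodST hprodT
            (Finset.prod_nonneg fun v _ => add_nonneg (hq0 v) (hε0 v))
            (Finset.prod_nonneg fun j _ => he0 j)
      _ = ∏ j ∈ S, e j := Finset.prod_sdiff hTS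

end Main

/-- Negative correlation: if each `j(a)`, `a ∈ A`, is chosen independently and
uniformly at random from the nonempty set `J a ⊆ {1,…,m}`, and `E^j` is the
event that `j(a) = j` for some `a ∈ N j`, then for every `S ⊆ {1,…,m}`,
`P(⋂_{j ∈ S} E^j) ≤ ∏_{j ∈ S} P(E^j)`. -/
theorem hitEvents_negatively_correlated {A : Type*} [Fintype A] {m : ℕ}
    (J : A → Finset (Fin m)) (hJ : ∀ a, (J a).Nonempty)
    (N : Fin m → Set A) (S : Finset (Fin m)) :
    uniformProb J (⋂ j ∈ S, hitEvent J N j) ≤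
      ∏ j ∈ S, uniformProb J (hitEvent J N j) := by
  classical
  exact main_lemma hJ Finset.univ N S (fun j _ x _ => by simp)
end
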